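/- arXiv:2410.10401 — 7 statements merged into one kernel-verified Lean document; each statement's English description precedes it below -/
import Mathlib

section
/- For a torsion group G, the power graph of G equals the enhanced power graph of G if and only if G has no subgroup isomorphic to C_p × C_q for distinct primes p and q. -/
open Subgroup

/-- The power graph of a group: `x ~ y` iff `x ≠ y` and one is a power of the other. -/
def powGraph (G : Type*) [Group G] : SimpleGraph G where
  Adj x y := x ≠ y ∧ (x ∈ zpowers y ∨ y ∈ zpowers x)
  symm := by constructor; rintro x y ⟨h1, h2⟩; exact ⟨h1.symm, h2.symm⟩
  loopless := by constructor; rintro x ⟨h1, _⟩; exact h1 rfl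

/-- The enhanced power graph: `x ~ y` iff `x ≠ y` and `⟨x, y⟩` is cyclic. -/
def epowGraph (G : Type*) [Group G] : SimpleGraph G where
  Adj x y := x ≠ y ∧ IsCyclic (closure ({x, y} : Set G))
  symm := by
    constructor
    rintro x y ⟨h1, h2⟩
    refine ⟨h1.symm, ?_⟩
    rwa [Set.pair_comm y x]
  loopless := by constructor; rintro x ⟨h1, _⟩; exact h1 rfl

/-- The commuting graph: `x ~ y` iff `x ≠ y` and `x y = y x`. -/
def comGraph (G : Type*) [Group G] : SimpleGraph G where
  Adj x y := x ≠ y ∧ x * y = y * x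
  symm := by constructor; rintro x y ⟨h1, h2⟩; exact ⟨h1.symm, h2.symm⟩
  loopless := by constructor; rintro x ⟨h1, _⟩; exact h1 rfl

/-- `G` has a subgroup isomorphic to `H`. -/
def HasSubgroupIso (G : Type*) [Group G] (H : Type*) [Group H] : Prop :=
  ∃ K : Subgroup G, Nonempty (K ≃* H)

section Helpers

/-- The subgroup `zpowers z` is cyclic. -/
lemma isCyclic_zpowers' {G : Type*} [Group G] (z : G) : IsCyclic (zpowers z) := by
  refine ⟨⟨⟨z, mem_zpowers z⟩, ?_⟩⟩
  rintro ⟨x, hx⟩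
  obtain ⟨k, hk⟩ := mem_zpowers_iff.mp hx
  exact ⟨k, Subtype.ext (by simpa using hk)⟩

lemma coe_mem_zpowers' {G : Type*} [Group G] {H : Subgroup G} {g x : H}
    (h : x ∈ zpowers g) : (x : G) ∈ zpowers (g : G) := by
  obtain ⟨k, hk⟩ := mem_zpowers_iff.mp h
  exact ⟨k, by rw [← hk]; simp⟩

/-- In a cyclic group generated by `z` of finite order, if `orderOf x ∣ orderOf y` then
`x` is a power of `y`. -/
lemma mem_zpowers_of_orderOf_dvd' {G : Type*} [Group G] {z x y : G} (hz : IsOfFinOrder z)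
    (hx : x ∈ zpowers z) (hy : y ∈ zpowers z)
    (hd : orderOf x ∣ orderOf y) : x ∈ zpowers y := by
  obtain ⟨i, hi⟩ := hz.mem_powers_iff_mem_zpowers.mpr hx
  obtain ⟨j, hj⟩ := hz.mem_powers_iff_mem_zpowers.mpr hy
  simp only at hi hj
  subst hi hj
  rw [hz.orderOf_pow, hz.orderOf_pow] at hd
  have hn0 : 0 < orderOf z := hz.orderOf_pos
  set n := orderOf z with hn
  set g1 := Nat.gcd n i with hg1
  set g2 := Nat.gcd n j with hg2
  have h1 : g1 ∣ n := Nat.gcd_dvd_left n i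
  have h2 : g2 ∣ n := Nat.gcd_dvd_left n j
  have hg1p : 0 < g1 := Nat.gcd_pos_of_pos_left i hn0
  have hg2p : 0 < g2 := Nat.gcd_pos_of_pos_left j hn0
  have ha1 : g1 * (n / g1) = n := Nat.mul_div_cancel' h1
  have ha2 : g2 * (n / g2) = n := Nat.mul_div_cancel' h2
  have ha1p : 0 < n / g1 := Nat.div_pos (Nat.le_of_dvd hn0 h1) hg1p
  obtain ⟨s, hs⟩ := hd
  have hgg : g2 ∣ g1 := by
    refine ⟨s, ?_⟩
    have h3 : g1 * (n / g1) = g2 * s * (n / g1) := by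
      conv_lhs => rw [ha1, ← ha2, hs]
      ring
    exact Nat.eq_of_mul_eq_mul_right ha1p h3
  have hg2i : g2 ∣ i := hgg.trans (Nat.gcd_dvd_right n i)
  have hbz : z ^ g2 ∈ zpowers (z ^ j) := by
    have hb : (g2 : ℤ) = n * Nat.gcdA n j + j * Nat.gcdB n j := Nat.gcd_eq_gcd_ab n j
    have h5 : z ^ ((n : ℤ) * Nat.gcdA n j) = 1 := by
      rw [zpow_mul, zpow_natCast, hn, pow_orderOf_eq_one, one_zpow]
    have h6 : z ^ g2 = (z ^ j) ^ Nat.gcdB n j := by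
      calc z ^ g2 = z ^ ((g2 : ℤ)) := (zpow_natCast z g2).symm
        _ = z ^ ((n : ℤ) * Nat.gcdA n j + (j : ℤ) * Nat.gcdB n j) := by rw [← hb]
        _ = z ^ ((n : ℤ) * Nat.gcdA n j) * z ^ ((j : ℤ) * Nat.gcdB n j) := zpow_add z _ _
        _ = z ^ ((j : ℤ) * Nat.gcdB n j) := by rw [h5, one_mul]
        _ = (z ^ (j : ℤ)) ^ Nat.gcdB n j := zpow_mul z _ _
        _ = (z ^ j) ^ Nat.gcdB n j := by rw [zpow_natCast]
    exact ⟨Nat.gcdB n j, h6.symm⟩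
  have h4 : z ^ i = (z ^ g2) ^ (i / g2) := by
    rw [← pow_mul, Nat.mul_div_cancel' hg2i]
  rw [h4]
  exact Subgroup.pow_mem _ hbz _

end Helpers

theorem torsion_powGraph_eq_epowGraph_iff
    {G : Type*} [Group G] (htor : ∀ g : G, IsOfFinOrder g) :
    powGraph G = epowGraph G ↔
      ¬ ∃ p q : ℕ, p.Prime ∧ q.Prime ∧ p ≠ q ∧
        HasSubgroupIso G (Multiplicative (ZMod p × ZMod q)) := by
  constructor
  · intro h
    rintro ⟨p, q, hp, hq, hpq, K, ⟨e⟩⟩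
    haveI : Fact p.Prime := ⟨hp⟩
    haveI : Fact q.Prime := ⟨hq⟩
    haveI : NeZero p := ⟨hp.pos.ne'⟩
    haveI : NeZero q := ⟨hq.pos.ne'⟩
    have hcop : Nat.Coprime p q := (Nat.coprime_primes hp hq).mpr hpq
    haveI : IsAddCyclic (ZMod p × ZMod q) :=
      isAddCyclic_of_surjective (ZMod.chineseRemainder hcop) (ZMod.chineseRemainder hcop).surjective
    haveI hKc : IsCyclic K := isCyclic_of_surjective e.symm e.symm.surjective
    set x0 : K := e.symm (Multiplicative.ofAdd ((1 : ZMod p), (0 : ZMod q)))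
    set y0 : K := e.symm (Multiplicative.ofAdd ((0 : ZMod p), (1 : ZMod q)))
    have hx0 : orderOf x0 = p := by
      rw [e.symm.orderOf_eq, orderOf_ofAdd_eq_addOrderOf, Prod.addOrderOf_mk,
        ZMod.addOrderOf_one, addOrderOf_zero, Nat.lcm_one_right]
    have hy0 : orderOf y0 = q := by
      rw [e.symm.orderOf_eq, orderOf_ofAdd_eq_addOrderOf, Prod.addOrderOf_mk,
        ZMod.addOrderOf_one, addOrderOf_zero, Nat.lcm_one_left]
    set x : G := (x0 : G) with hxdef
    set y : G := (y0 : G) with hydef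
    have hox : orderOf x = p := by rw [hxdef, orderOf_coe, hx0]
    have hoy : orderOf y = q := by rw [hydef, orderOf_coe, hy0]
    have hxy : x ≠ y := fun hh => hpq (by rw [← hox, ← hoy, hh])
    have hsub : ({x, y} : Set G) ⊆ (K : Set G) := by
      rintro a (rfl | rfl)
      · exact x0.2
      · exact y0.2
    have hepow : (epowGraph G).Adj x y :=
      ⟨hxy, Subgroup.isCyclic_of_le ((closure_le K).mpr hsub)⟩
    have hpow : ¬ (powGraph G).Adj x y := by
      rintro ⟨-, hm | hm⟩
      · have hd := orderOf_dvd_of_mem_zpowers hm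
        rw [hox, hoy] at hd
        exact hpq ((Nat.prime_dvd_prime_iff_eq hp hq).mp hd)
      · have hd := orderOf_dvd_of_mem_zpowers hm
        rw [hox, hoy] at hd
        exact hpq (((Nat.prime_dvd_prime_iff_eq hq hp).mp hd).symm)
    rw [h] at hpow
    exact hpow hepow
  · intro h
    by_contra hne
    haveI := fun z : G => isCyclic_zpowers' z
    have hle : ∀ x y : G, (powGraph G).Adj x y → (epowGraph G).Adj x y := by
      rintro x y ⟨hxy, hm | hm⟩
      · exact ⟨hxy, Subgroup.isCyclic_of_le (H' := zpowers y)
          ((closure_le _).mpr (Set.pair_subset hm (mem_zpowers y)))⟩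
      · exact ⟨hxy, Subgroup.isCyclic_of_le (H' := zpowers x)
          ((closure_le _).mpr (Set.pair_subset (mem_zpowers x) hm))⟩
    obtain ⟨x, y, hxy⟩ : ∃ x y : G, ¬ ((powGraph G).Adj x y ↔ (epowGraph G).Adj x y) := by
      by_contra hall
      push_neg at hall
      exact hne (SimpleGraph.ext (by ext a b; exact hall a b))
    have hep : (epowGraph G).Adj x y := by
      by_contra hnep
      exact hxy ⟨fun hp' => absurd (hle _ _ hp') hnep, fun he => absurd he hnep⟩
    have hnp : ¬ (powGraph G).Adj x y := fun hp' => hxy ⟨fun _ => hle _ _ hp', fun _ => hp'⟩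
    obtain ⟨hne', hcyc⟩ := hep
    have hnmem : ¬(x ∈ zpowers y ∨ y ∈ zpowers x) := fun hm => hnp ⟨hne', hm⟩
    push_neg at hnmem
    obtain ⟨hm1, hm2⟩ := hnmem
    obtain ⟨g, hg⟩ := hcyc.exists_generator
    set z : G := (g : G) with hzdef
    have hxz : x ∈ zpowers z :=
      coe_mem_zpowers' (hg ⟨x, subset_closure (Set.mem_insert x {y})⟩)
    have hyz : y ∈ zpowers z :=
      coe_mem_zpowers' (hg ⟨y, subset_closure (Set.mem_insert_of_mem x rfl)⟩)
    have hz : IsOfFinOrder z := htor z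
    have hnd1 : ¬ orderOf x ∣ orderOf y :=
      fun hd => hm1 (mem_zpowers_of_orderOf_dvd' hz hxz hyz hd)
    have hnd2 : ¬ orderOf y ∣ orderOf x :=
      fun hd => hm2 (mem_zpowers_of_orderOf_dvd' hz hyz hxz hd)
    have ha0 : orderOf x ≠ 0 := (htor x).orderOf_pos.ne'
    have hb0 : orderOf y ≠ 0 := (htor y).orderOf_pos.ne'
    obtain ⟨p, hplt⟩ : ∃ p, (orderOf y).factorization p < (orderOf x).factorization p := by
      by_contra hc
      push_neg at hc
      exact hnd1 ((Nat.factorization_le_iff_dvd ha0 hb0).mp fun p => hc p)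
    obtain ⟨q, hqlt⟩ : ∃ q, (orderOf x).factorization q < (orderOf y).factorization q := by
      by_contra hc
      push_neg at hc
      exact hnd2 ((Nat.factorization_le_iff_dvd hb0 ha0).mp fun p => hc p)
    have hpmem : p ∈ (orderOf x).primeFactors := by
      rw [← Nat.support_factorization]
      exact Finsupp.mem_support_iff.mpr (Nat.lt_of_le_of_lt (Nat.zero_le _) hplt).ne'
    have hqmem : q ∈ (orderOf y).primeFactors := by
      rw [← Nat.support_factorization]
      exact Finsupp.mem_support_iff.mpr (Nat.lt_of_le_of_lt (Nat.zero_le _) hqlt).ne'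
    have hp : p.Prime := Nat.prime_of_mem_primeFactors hpmem
    have hq : q.Prime := Nat.prime_of_mem_primeFactors hqmem
    have hpq : p ≠ q := by
      rintro rfl
      exact absurd hqlt (Nat.lt_asymm hplt)
    have hpa : p ∣ orderOf x := Nat.dvd_of_mem_primeFactors hpmem
    have hqb : q ∣ orderOf y := Nat.dvd_of_mem_primeFactors hqmem
    have hcop : Nat.Coprime p q := (Nat.coprime_primes hp hq).mpr hpq
    have hn0 : 0 < orderOf z := hz.orderOf_pos
    have hpqn : p * q ∣ orderOf z :=
      hcop.mul_dvd_of_dvd_of_dvd (hpa.trans (orderOf_dvd_of_mem_zpowers hxz))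
        (hqb.trans (orderOf_dvd_of_mem_zpowers hyz))
    have hpq0 : 0 < p * q := Nat.mul_pos hp.pos hq.pos
    set m := orderOf z / (p * q) with hmdef
    have hm0 : m ≠ 0 := (Nat.div_pos (Nat.le_of_dvd hn0 hpqn) hpq0).ne'
    have hmdvd : m ∣ orderOf z := Nat.div_dvd_of_dvd hpqn
    set w : G := z ^ m with hwdef
    have how : orderOf w = p * q := by
      rw [hwdef, orderOf_pow_of_dvd hm0 hmdvd, hmdef, Nat.div_div_self hpqn hn0.ne']
    haveI : Fact p.Prime := ⟨hp⟩
    haveI : Fact q.Prime := ⟨hq⟩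
    haveI : NeZero p := ⟨hp.pos.ne'⟩
    haveI : NeZero q := ⟨hq.pos.ne'⟩
    haveI : IsAddCyclic (ZMod p × ZMod q) :=
      isAddCyclic_of_surjective (ZMod.chineseRemainder hcop) (ZMod.chineseRemainder hcop).surjective
    haveI : IsCyclic (zpowers w) := isCyclic_zpowers' w
    have hcard : Nat.card (zpowers w) = Nat.card (Multiplicative (ZMod p × ZMod q)) := by
      rw [Nat.card_zpowers, how, Nat.card_congr Multiplicative.toAdd, Nat.card_prod,
        Nat.card_zmod, Nat.card_zmod]
    exact h ⟨p, q, hp, hq, hpq, zpowers w, ⟨mulEquivOfCyclicCardEq hcard⟩⟩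
end

section
/- The enhanced power graph and the commuting graph of a group G are equal if and only if G does not have a subgroup isomorphic to ℤ × ℤ, ℤ × C_p, or C_p × C_p for any prime p. -/
open Subgroup

open Subgroup

section Aux

/-- A group is "additively cyclic" in the explicit sense. -/
def AddCyc (Q : Type*) [AddGroup Q] : Prop := ∃ g : Q, ∀ x : Q, ∃ m : ℤ, m • g = x

lemma isCyclic_mult_iff {Q : Type*} [AddGroup Q] :
    IsCyclic (Multiplicative Q) ↔ AddCyc Q := by
  constructor
  · rintro ⟨g, hg⟩
    refine ⟨g.toAdd, fun x => ?_⟩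
    obtain ⟨m, hm⟩ := mem_zpowers_iff.mp (hg (Multiplicative.ofAdd x))
    exact ⟨m, by simpa [toAdd_zpow] using congrArg Multiplicative.toAdd hm⟩
  · rintro ⟨g, hg⟩
    refine ⟨Multiplicative.ofAdd g, fun x => mem_zpowers_iff.mpr ?_⟩
    obtain ⟨m, hm⟩ := hg x.toAdd
    exact ⟨m, by rw [← ofAdd_zsmul, hm]; rfl⟩

lemma isCyclic_iff_addCyc {H : Type*} [Group H] : IsCyclic H ↔ AddCyc (Additive H) := by
  constructor
  · rintro ⟨g, hg⟩
    refine ⟨Additive.ofMul g, fun x => ?_⟩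
    obtain ⟨m, hm⟩ := mem_zpowers_iff.mp (hg x.toMul)
    refine ⟨m, ?_⟩
    apply Additive.toMul.injective
    rw [toMul_zsmul]
    exact hm
  · rintro ⟨g, hg⟩
    refine ⟨g.toMul, fun x => mem_zpowers_iff.mpr ?_⟩
    obtain ⟨m, hm⟩ := hg (Additive.ofMul x)
    exact ⟨m, by rw [← toMul_zsmul, hm]; rfl⟩

lemma AddCyc.of_surjective {P R : Type*} [AddGroup P] [AddGroup R] (f : P →+ R)
    (hf : Function.Surjective f) (h : AddCyc P) : AddCyc R := by
  obtain ⟨g, hg⟩ := h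
  refine ⟨f g, fun x => ?_⟩
  obtain ⟨y, rfl⟩ := hf x
  obtain ⟨m, hm⟩ := hg y
  exact ⟨m, by rw [← map_zsmul, hm]⟩

lemma AddCyc.of_addEquiv {P R : Type*} [AddGroup P] [AddGroup R] (e : P ≃+ R)
    (h : AddCyc P) : AddCyc R :=
  h.of_surjective e.toAddMonoidHom (fun x => ⟨e.symm x, e.apply_symm_apply x⟩)

lemma zsmul_pair {α β : Type*} [SubNegMonoid α] [SubNegMonoid β] (m : ℤ) (a : α) (b : β) :
    m • (a, b) = (m • a, m • b) := rfl

lemma not_addCyc_int_int : ¬ AddCyc (ℤ × ℤ) := by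
  rintro ⟨⟨a, b⟩, hg⟩
  obtain ⟨m, hm⟩ := hg (1, 0)
  obtain ⟨n, hn⟩ := hg (0, 1)
  rw [zsmul_pair, Prod.mk.injEq] at hm hn
  obtain ⟨hm1, hm2⟩ := hm
  obtain ⟨hn1, hn2⟩ := hn
  simp only [smul_eq_mul] at hm1 hm2 hn1 hn2
  have ha : a ≠ 0 := by rintro rfl; simp at hm1
  have : n = 0 := by
    rcases mul_eq_zero.mp hn1 with h | h
    · exact h
    · exact absurd h ha
  subst this
  simp at hn2

lemma not_addCyc_int_zmod (p : ℕ) (hp : p.Prime) : ¬ AddCyc (ℤ × ZMod p) := by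
  haveI : Fact (1 < p) := ⟨hp.one_lt⟩
  rintro ⟨⟨a, b⟩, hg⟩
  obtain ⟨m, hm⟩ := hg (1, 0)
  obtain ⟨n, hn⟩ := hg (0, 1)
  rw [zsmul_pair, Prod.mk.injEq] at hm hn
  obtain ⟨hm1, _⟩ := hm
  obtain ⟨hn1, hn2⟩ := hn
  simp only [smul_eq_mul] at hm1 hn1
  have ha : a ≠ 0 := by rintro rfl; simp at hm1
  have : n = 0 := by
    rcases mul_eq_zero.mp hn1 with h | h
    · exact h
    · exact absurd h ha
  subst this
  rw [zero_zsmul] at hn2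
  exact one_ne_zero hn2.symm

lemma not_addCyc_zmod_zmod (p : ℕ) (hp : p.Prime) : ¬ AddCyc (ZMod p × ZMod p) := by
  haveI : Fact p.Prime := ⟨hp⟩
  rintro ⟨⟨a, b⟩, hg⟩
  obtain ⟨m, hm⟩ := hg (1, 0)
  obtain ⟨n, hn⟩ := hg (0, 1)
  rw [zsmul_pair, Prod.mk.injEq] at hm hn
  obtain ⟨hm1, hm2⟩ := hm
  obtain ⟨hn1, hn2⟩ := hn
  rw [zsmul_eq_mul] at hm1 hm2 hn1 hn2
  have hmne : (m : ZMod p) ≠ 0 := by rintro h; rw [h, zero_mul] at hm1; exact one_ne_zero hm1.symm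
  have hb : b = 0 := by
    rcases mul_eq_zero.mp hm2 with h | h
    · exact absurd h hmne
    · exact h
  rw [hb, mul_zero] at hn2
  exact one_ne_zero hn2.symm

lemma closure_pair_eq_top {Q : Type*} [AddCommGroup Q] (u v : Q)
    (h : ∀ q : Q, ∃ m n : ℤ, m • u + n • v = q) :
    closure ({Multiplicative.ofAdd u, Multiplicative.ofAdd v} : Set (Multiplicative Q)) = ⊤ := by
  rw [eq_top_iff]
  intro q _
  obtain ⟨m, n, hmn⟩ := h q.toAdd
  have hq : q = (Multiplicative.ofAdd u) ^ m * (Multiplicative.ofAdd v) ^ n := by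
    apply Multiplicative.toAdd.injective
    simp only [toAdd_mul, toAdd_zpow]
    exact hmn.symm
  rw [hq]
  exact mul_mem (zpow_mem (subset_closure (by simp)) m)
    (zpow_mem (subset_closure (by simp)) n)

lemma exists_bad_pair {G H : Type*} [Group G] [CommGroup H] (h : HasSubgroupIso G H)
    (a b : H) (hab : a ≠ b) (hgen : closure ({a, b} : Set H) = ⊤) (hnc : ¬ IsCyclic H) :
    ∃ x y : G, x ≠ y ∧ x * y = y * x ∧ ¬ IsCyclic (closure ({x, y} : Set G)) := by
  obtain ⟨K, ⟨e⟩⟩ := h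
  let f : H →* G := K.subtype.comp e.symm.toMonoidHom
  have hf : Function.Injective f := K.subtype_injective.comp e.symm.injective
  refine ⟨f a, f b, fun hh => hab (hf hh), by rw [← map_mul, mul_comm, map_mul], ?_⟩
  intro hcyc
  have hcl : closure ({f a, f b} : Set G) = f.range := by
    rw [show ({f a, f b} : Set G) = f '' {a, b} from (Set.image_pair f a b).symm,
      ← MonoidHom.map_closure, hgen, ← MonoidHom.range_eq_map]
  rw [hcl] at hcyc
  haveI := hcyc
  exact hnc (isCyclic_of_surjective (MonoidHom.ofInjective hf).symm.toMonoidHom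
    (MonoidHom.ofInjective hf).symm.surjective)

end Aux
section Aux2

lemma crt_finset {ι : Type} (m : ι → ℕ) (hm : ∀ i, m i ≠ 0) (s : Finset ι)
    (hco : ∀ i ∈ s, ∀ j ∈ s, i ≠ j → Nat.Coprime (m i) (m j)) (a : ∀ i, ZMod (m i)) :
    ∃ k : ℤ, ∀ i ∈ s, ((k : ℤ) : ZMod (m i)) = a i := by
  classical
  induction s using Finset.induction_on with
  | empty => exact ⟨0, fun i hi => absurd hi (Finset.notMem_empty i)⟩
  | insert _ _ hj ih =>
    rename_i j s
    obtain ⟨k, hk⟩ := ih fun i hi i' hi' hne =>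
      hco i (Finset.mem_insert_of_mem hi) i' (Finset.mem_insert_of_mem hi') hne
    set M : ℕ := ∏ i ∈ s, m i with hM
    have hcop : Nat.Coprime (m j) M := by
      apply Nat.Coprime.prod_right
      intro i hi
      exact hco j (Finset.mem_insert_self j s) i (Finset.mem_insert_of_mem hi)
        (fun h => hj (h ▸ hi))
    have : IsCoprime ((m j : ℤ)) ((M : ℤ)) := Int.isCoprime_iff_gcd_eq_one.mpr hcop
    obtain ⟨u, v, huv⟩ := this
    haveI : NeZero (m j) := ⟨hm j⟩
    obtain ⟨b, hb⟩ := ZMod.intCast_surjective (a j)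
    refine ⟨b * (v * M) + k * (u * m j), fun i hi => ?_⟩
    rcases Finset.mem_insert.mp hi with rfl | hi
    · have hdvd : ((m i : ℤ)) ∣ b - (b * (v * M) + k * (u * m i)) :=
        ⟨(b - k) * u, by linear_combination (-b) * huv⟩
      calc ((b * (v * M) + k * (u * m i) : ℤ) : ZMod (m i))
          = ((b : ℤ) : ZMod (m i)) := by
            rw [ZMod.intCast_eq_intCast_iff]
            exact Int.modEq_iff_dvd.mpr hdvd
        _ = a i := hb
    · have hMdvd : ((m i : ℤ)) ∣ (M : ℤ) :=
        Int.natCast_dvd_natCast.mpr (Finset.dvd_prod_of_mem m hi)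
      have hdvd : ((m i : ℤ)) ∣ k - (b * (v * M) + k * (u * m j)) :=
        dvd_trans hMdvd ⟨(k - b) * v, by linear_combination (-k) * huv⟩
      calc ((b * (v * M) + k * (u * m j) : ℤ) : ZMod (m i))
          = ((k : ℤ) : ZMod (m i)) := by
            rw [ZMod.intCast_eq_intCast_iff]
            exact Int.modEq_iff_dvd.mpr hdvd
        _ = a i := hk i hi

lemma addCyc_pi {ι : Type} [Fintype ι] (m : ι → ℕ) (hm : ∀ i, m i ≠ 0)
    (hco : ∀ i j, i ≠ j → Nat.Coprime (m i) (m j)) : AddCyc (∀ i, ZMod (m i)) := by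
  refine ⟨fun i => 1, fun x => ?_⟩
  obtain ⟨k, hk⟩ := crt_finset m hm Finset.univ
    (fun i _ j _ hne => hco i j hne) x
  refine ⟨k, funext fun i => ?_⟩
  have : (k • fun i => (1 : ZMod (m i))) i = k • (1 : ZMod (m i)) := rfl
  rw [this, zsmul_one]
  exact hk i (Finset.mem_univ i)

lemma addCyc_of_subsingleton {α : Type*} [AddGroup α] [Subsingleton α] : AddCyc α :=
  ⟨0, fun x => ⟨0, Subsingleton.elim _ _⟩⟩

lemma addCyc_prod_left {α β : Type*} [AddGroup α] [AddGroup β] [Subsingleton α]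
    (h : AddCyc β) : AddCyc (α × β) := by
  obtain ⟨g, hg⟩ := h
  refine ⟨(0, g), fun x => ?_⟩
  obtain ⟨m, hm⟩ := hg x.2
  exact ⟨m, Prod.ext (Subsingleton.elim _ _) (by rw [zsmul_pair] at *; exact hm)⟩

lemma addCyc_prod_right {α β : Type*} [AddGroup α] [AddGroup β] [Subsingleton β]
    (h : AddCyc α) : AddCyc (α × β) := by
  obtain ⟨g, hg⟩ := h
  refine ⟨(g, 0), fun x => ?_⟩
  obtain ⟨m, hm⟩ := hg x.1
  exact ⟨m, Prod.ext (by rw [zsmul_pair] at *; exact hm) (Subsingleton.elim _ _)⟩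

lemma addCyc_finsupp_fin_one : AddCyc (Fin 1 →₀ ℤ) := by
  refine ⟨Finsupp.single 0 1, fun f => ⟨f 0, Finsupp.ext fun a => ?_⟩⟩
  have ha : a = 0 := Subsingleton.elim a 0
  subst ha
  show (f 0 : ℤ) • (Finsupp.single (0 : Fin 1) (1 : ℤ)) 0 = f 0
  rw [Finsupp.single_eq_same, smul_eq_mul, mul_one]

lemma zmod_emb (q N : ℕ) (hq : q.Prime) (hdvd : q ∣ N) (hN : N ≠ 0) :
    ∃ f : ZMod q →+ ZMod N, Function.Injective f := by
  obtain ⟨d, rfl⟩ := hdvd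
  have hd : d ≠ 0 := by rintro rfl; simp at hN
  haveI : NeZero q := ⟨hq.pos.ne'⟩
  haveI : NeZero (q * d) := ⟨hN⟩
  have hker : (zmultiplesHom (ZMod (q * d)) (d : ZMod (q * d))) (q : ℤ) = 0 := by
    show (q : ℤ) • (d : ZMod (q * d)) = 0
    rw [zsmul_eq_mul]
    push_cast
    exact_mod_cast ZMod.natCast_self (q * d)
  refine ⟨ZMod.lift q ⟨zmultiplesHom (ZMod (q * d)) (d : ZMod (q * d)), hker⟩, ?_⟩
  rw [injective_iff_map_eq_zero]
  intro z hz
  obtain ⟨k, rfl⟩ := ZMod.intCast_surjective z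
  rw [ZMod.lift_coe] at hz
  have hz' : ((k * d : ℤ) : ZMod (q * d)) = 0 := by
    rw [← hz]
    show _ = (k : ℤ) • (d : ZMod (q * d))
    rw [zsmul_eq_mul]
    push_cast
    ring
  rw [ZMod.intCast_zmod_eq_zero_iff_dvd] at hz'
  rw [ZMod.intCast_zmod_eq_zero_iff_dvd]
  have : ((q : ℤ) * d) ∣ k * d := by exact_mod_cast hz'
  have hdZ : (d : ℤ) ≠ 0 := Int.natCast_ne_zero.mpr hd
  exact (mul_dvd_mul_iff_right hdZ).mp this

end Aux2
section Main

variable {G : Type*} [Group G]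

lemma epow_adj_imp_com {x y : G} (h : (epowGraph G).Adj x y) : (comGraph G).Adj x y := by
  obtain ⟨hne, hcyc⟩ := h
  refine ⟨hne, ?_⟩
  obtain ⟨g, hg⟩ := hcyc
  have hx : x ∈ closure ({x, y} : Set G) := subset_closure (by simp)
  have hy : y ∈ closure ({x, y} : Set G) := subset_closure (by simp)
  obtain ⟨m, hm⟩ := mem_zpowers_iff.mp (hg ⟨x, hx⟩)
  obtain ⟨n, hn⟩ := mem_zpowers_iff.mp (hg ⟨y, hy⟩)
  have hmx : ((g : G)) ^ m = x := by
    have := congrArg (Subtype.val) hm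
    simpa using this
  have hny : ((g : G)) ^ n = y := by
    have := congrArg (Subtype.val) hn
    simpa using this
  obtain ⟨g0, hg0⟩ : ∃ z : G, z = (g : G) := ⟨(g : G), rfl⟩
  rw [← hg0] at hmx hny
  rw [← hmx, ← hny, ← zpow_add, ← zpow_add, add_comm]

lemma bad_subgroup {x y : G} (hc : x * y = y * x)
    (hnc : ¬ IsCyclic (closure ({x, y} : Set G))) :
    HasSubgroupIso G (Multiplicative (ℤ × ℤ)) ∨
      ∃ p : ℕ, p.Prime ∧
        (HasSubgroupIso G (Multiplicative (ℤ × ZMod p)) ∨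
          HasSubgroupIso G (Multiplicative (ZMod p × ZMod p))) := by
  classical
  set A := closure ({x, y} : Set G) with hA
  letI : CommGroup A := closureCommGroupOfComm (by
    rintro a ha b hb
    rcases ha with rfl | ha <;> rcases hb with rfl | hb
    · rfl
    · rw [Set.mem_singleton_iff] at hb; subst hb; exact hc
    · rw [Set.mem_singleton_iff] at ha; subst ha; exact hc.symm
    · rw [Set.mem_singleton_iff] at ha hb; subst ha; subst hb; rfl)
  haveI : Finite ({x, y} : Set G) := ((Set.finite_singleton y).insert x).to_subtype
  haveI : Group.FG A := Group.closure_finite_fg ({x, y} : Set G)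
  obtain ⟨n, ι, fι, p, hp, e, ⟨ψ⟩⟩ :=
    @AddCommGroup.equiv_free_prod_directSum_zmod (Additive A) _
      (GroupFG.iff_add_fg.mp ‹Group.FG A›)
  set D := DirectSum ι (fun i => ZMod (p i ^ e i)) with hD
  have hFD : ¬ AddCyc ((Fin n →₀ ℤ) × D) := by
    intro h
    exact hnc (isCyclic_iff_addCyc.mpr
      (h.of_addEquiv ψ.symm))
  have build : ∀ (Q : Type) (_ : AddGroup Q) (θ : Q →+ (Fin n →₀ ℤ) × D),
      Function.Injective θ → HasSubgroupIso G (Multiplicative Q) := by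
    intro Q _ θ hθ
    let φ : Q →+ Additive A := ψ.symm.toAddMonoidHom.comp θ
    have hφ : Function.Injective φ := ψ.symm.injective.comp hθ
    let f : Multiplicative Q →* G :=
      (A.subtype.comp (MulEquiv.multiplicativeAdditive A).toMonoidHom).comp
        (AddMonoidHom.toMultiplicative φ)
    have hf : Function.Injective f := by
      intro a b hab
      have h1 : A.subtype (φ a.toAdd) = A.subtype (φ b.toAdd) := hab
      exact Multiplicative.toAdd.injective (hφ (A.subtype_injective h1))
    exact ⟨f.range, ⟨(MonoidHom.ofInjective hf).symm⟩⟩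
  by_cases hn2 : 2 ≤ n
  · left
    let i0 : Fin n := ⟨0, by omega⟩
    let i1 : Fin n := ⟨1, by omega⟩
    have hne01 : i0 ≠ i1 := by simp [i0, i1, Fin.ext_iff]
    let θ0 : ℤ × ℤ →+ (Fin n →₀ ℤ) :=
      (Finsupp.singleAddHom i0).coprod (Finsupp.singleAddHom i1)
    have hθ0 : Function.Injective θ0 := by
      rw [injective_iff_map_eq_zero]
      rintro ⟨a, b⟩ hab
      have h0 := congrArg (fun f : Fin n →₀ ℤ => f i0) hab
      have h1 := congrArg (fun f : Fin n →₀ ℤ => f i1) hab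
      simp only [θ0, AddMonoidHom.coprod_apply, Finsupp.singleAddHom_apply, Finsupp.add_apply,
        Finsupp.single_eq_same, Finsupp.single_eq_of_ne hne01,
        Finsupp.single_eq_of_ne (Ne.symm hne01), Finsupp.coe_zero, Pi.zero_apply,
        add_zero, zero_add] at h0 h1
      exact Prod.ext h0 h1
    have hinl : Function.Injective (AddMonoidHom.inl (Fin n →₀ ℤ) D) :=
      fun a b hab => congrArg Prod.fst hab
    exact build (ℤ × ℤ) inferInstance ((AddMonoidHom.inl (Fin n →₀ ℤ) D).comp θ0)
      (hinl.comp hθ0)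
  · by_cases htor : ∃ i, 1 ≤ e i
    · obtain ⟨i, hi⟩ := htor
      by_cases hn1 : 1 ≤ n
      · right
        refine ⟨p i, hp i, Or.inl ?_⟩
        obtain ⟨femb, hfemb⟩ := zmod_emb (p i) (p i ^ e i) (hp i)
          (dvd_pow_self (p i) (by omega)) (pow_ne_zero _ (hp i).pos.ne')
        let θ : ℤ × ZMod (p i) →+ (Fin n →₀ ℤ) × D :=
          AddMonoidHom.prodMap (Finsupp.singleAddHom (⟨0, by omega⟩ : Fin n))
            ((DirectSum.of (fun j => ZMod (p j ^ e j)) i).comp femb)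
        have hof : Function.Injective (DirectSum.of (fun j => ZMod (p j ^ e j)) i) := by
          intro a b hab
          have := congrArg (fun z => z i) hab
          simpa [DirectSum.of_eq_same] using this
        have hθ : Function.Injective θ := by
          rw [injective_iff_map_eq_zero]
          rintro ⟨a, b⟩ hab
          have h1 : Finsupp.single (⟨0, by omega⟩ : Fin n) a = 0 := congrArg Prod.fst hab
          have h2 : DirectSum.of (fun j => ZMod (p j ^ e j)) i (femb b) = 0 :=
            congrArg Prod.snd hab
          have ha : a = 0 := by
            have := congrArg (fun f : Fin n →₀ ℤ => f ⟨0, by omega⟩) h1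
            simpa using this
          have hb0 : femb b = 0 := hof (by rw [h2, map_zero])
          have hb : b = 0 := hfemb (by rw [hb0, map_zero])
          rw [ha, hb]; rfl
        exact build (ℤ × ZMod (p i)) inferInstance θ hθ
      · -- n = 0
        obtain rfl : n = 0 := by omega
        haveI : Subsingleton (Fin 0 →₀ ℤ) :=
          ⟨fun f g => Finsupp.ext fun a => absurd a.2 (by omega)⟩
        by_cases hpair : ∃ i j, i ≠ j ∧ p i = p j ∧ 1 ≤ e i ∧ 1 ≤ e j
        · obtain ⟨i, j, hij, hpij, hei, hej⟩ := hpair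
          right
          refine ⟨p i, hp i, Or.inr ?_⟩
          obtain ⟨fi, hfi⟩ := zmod_emb (p i) (p i ^ e i) (hp i)
            (dvd_pow_self (p i) (by omega)) (pow_ne_zero _ (hp i).pos.ne')
          have hdvdj : p i ∣ p j ^ e j := by
            rw [hpij]; exact dvd_pow_self (p j) (by omega)
          obtain ⟨fj, hfj⟩ := zmod_emb (p i) (p j ^ e j) (hp i)
            hdvdj (pow_ne_zero _ (hp j).pos.ne')
          let θ0 : ZMod (p i) × ZMod (p i) →+ D :=
            ((DirectSum.of (fun l => ZMod (p l ^ e l)) i).comp fi).coprod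
              ((DirectSum.of (fun l => ZMod (p l ^ e l)) j).comp fj)
          have hθ0 : Function.Injective θ0 := by
            rw [injective_iff_map_eq_zero]
            rintro ⟨a, b⟩ hab
            have hI := congrArg (fun z : D => z i) hab
            have hJ := congrArg (fun z : D => z j) hab
            simp only [θ0, AddMonoidHom.coprod_apply, AddMonoidHom.coe_comp,
              Function.comp_apply, DirectSum.add_apply, DirectSum.of_eq_same,
              DirectSum.of_eq_of_ne _ _ _ hij, DirectSum.of_eq_of_ne _ _ _ (Ne.symm hij),
              DirectSum.zero_apply, add_zero, zero_add] at hI hJ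
            have ha : a = 0 := hfi (by rw [hI, map_zero])
            have hb : b = 0 := hfj (by rw [hJ, map_zero])
            rw [ha, hb]; rfl
          have hinr : Function.Injective (AddMonoidHom.inr (Fin 0 →₀ ℤ) D) :=
            fun a b hab => congrArg Prod.snd hab
          exact build (ZMod (p i) × ZMod (p i)) inferInstance
            ((AddMonoidHom.inr (Fin 0 →₀ ℤ) D).comp θ0) (hinr.comp hθ0)
        · exfalso
          apply hFD
          apply addCyc_prod_left
          have hco : ∀ i j : ι, i ≠ j → Nat.Coprime (p i ^ e i) (p j ^ e j) := by
            intro i j hij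
            by_cases hpij : p i = p j
            · have : e i = 0 ∨ e j = 0 := by
                by_contra hcon
                push_neg at hcon
                exact hpair ⟨i, j, hij, hpij, by omega, by omega⟩
              rcases this with h | h
              · rw [h, pow_zero]; exact Nat.coprime_one_left _
              · rw [h, pow_zero]; exact Nat.coprime_one_right _
            · exact Nat.Coprime.pow _ _ ((Nat.coprime_primes (hp i) (hp j)).mpr hpij)
          have hpi : AddCyc (∀ i : ι, ZMod (p i ^ e i)) :=
            addCyc_pi _ (fun i => pow_ne_zero _ (hp i).pos.ne') hco
          exact hpi.of_addEquiv (DirectSum.addEquivProd _).symm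
    · -- no torsion
      exfalso
      push_neg at htor
      haveI : Subsingleton D := by
        refine ⟨fun f g => DFinsupp.ext fun i => ?_⟩
        have h1 : p i ^ e i = 1 := by
          have := htor i
          rw [show e i = 0 from by omega, pow_zero]
        haveI : Subsingleton (ZMod (p i ^ e i)) := by rw [h1]; infer_instance
        exact Subsingleton.elim _ _
      apply hFD
      interval_cases n
      · haveI : Subsingleton (Fin 0 →₀ ℤ) :=
          ⟨fun f g => Finsupp.ext fun a => absurd a.2 (by omega)⟩
        exact addCyc_of_subsingleton
      · exact addCyc_prod_right addCyc_finsupp_fin_one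

end Main
section Final

lemma addCyc_helper_intint : ∀ q : ℤ × ℤ, ∃ m n : ℤ, m • ((1, 0) : ℤ × ℤ) + n • ((0, 1) : ℤ × ℤ) = q := by
  rintro ⟨a, b⟩
  refine ⟨a, b, ?_⟩
  rw [zsmul_pair, zsmul_pair]
  simp

lemma addCyc_helper_intzmod (p : ℕ) (hp : p.Prime) :
    ∀ q : ℤ × ZMod p, ∃ m n : ℤ, m • ((1, 0) : ℤ × ZMod p) + n • ((0, 1) : ℤ × ZMod p) = q := by
  haveI : NeZero p := ⟨hp.pos.ne'⟩
  rintro ⟨a, b⟩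
  obtain ⟨n, hn⟩ := ZMod.intCast_surjective b
  refine ⟨a, n, ?_⟩
  rw [zsmul_pair, zsmul_pair]
  simp [hn.symm]

lemma addCyc_helper_zmodzmod (p : ℕ) (hp : p.Prime) :
    ∀ q : ZMod p × ZMod p,
      ∃ m n : ℤ, m • ((1, 0) : ZMod p × ZMod p) + n • ((0, 1) : ZMod p × ZMod p) = q := by
  haveI : NeZero p := ⟨hp.pos.ne'⟩
  rintro ⟨a, b⟩
  obtain ⟨m, hm⟩ := ZMod.intCast_surjective a
  obtain ⟨n, hn⟩ := ZMod.intCast_surjective b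
  refine ⟨m, n, ?_⟩
  rw [zsmul_pair, zsmul_pair]
  simp [hm.symm, hn.symm]

theorem epowGraph_eq_comGraph_iff {G : Type*} [Group G] :
    epowGraph G = comGraph G ↔
      ¬ (HasSubgroupIso G (Multiplicative (ℤ × ℤ)) ∨
        ∃ p : ℕ, p.Prime ∧
          (HasSubgroupIso G (Multiplicative (ℤ × ZMod p)) ∨
            HasSubgroupIso G (Multiplicative (ZMod p × ZMod p)))) := by
  constructor
  · intro heq hbad
    obtain ⟨x, y, hxy, hc, hnc⟩ :
        ∃ x y : G, x ≠ y ∧ x * y = y * x ∧ ¬ IsCyclic (closure ({x, y} : Set G)) := by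
      rcases hbad with h | ⟨p, hp, h | h⟩
      · refine exists_bad_pair h (Multiplicative.ofAdd (1, 0)) (Multiplicative.ofAdd (0, 1))
          (by simp [Prod.ext_iff]) (closure_pair_eq_top _ _ addCyc_helper_intint) ?_
        rw [isCyclic_mult_iff]
        exact not_addCyc_int_int
      · haveI : Fact (1 < p) := ⟨hp.one_lt⟩
        refine exists_bad_pair h (Multiplicative.ofAdd (1, 0)) (Multiplicative.ofAdd (0, 1))
          (by simp [Prod.ext_iff]) (closure_pair_eq_top _ _ (addCyc_helper_intzmod p hp)) ?_
        rw [isCyclic_mult_iff]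
        exact not_addCyc_int_zmod p hp
      · haveI : Fact (1 < p) := ⟨hp.one_lt⟩
        refine exists_bad_pair h (Multiplicative.ofAdd (1, 0)) (Multiplicative.ofAdd (0, 1))
          (by simp [Prod.ext_iff]) (closure_pair_eq_top _ _ (addCyc_helper_zmodzmod p hp)) ?_
        rw [isCyclic_mult_iff]
        exact not_addCyc_zmod_zmod p hp
    have hadj : (comGraph G).Adj x y := ⟨hxy, hc⟩
    rw [← heq] at hadj
    exact hnc hadj.2
  · intro hno
    ext x y
    constructor
    · exact epow_adj_imp_com
    · rintro ⟨hxy, hc⟩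
      refine ⟨hxy, ?_⟩
      by_contra hnc
      exact hno (bad_subgroup hc hnc)

end Final
end

section
/- The power graph and the commuting graph of a group G are equal if and only if G does not have a subgroup isomorphic to ℤ, ℤ × ℤ, ℤ × C_p, or C_p × C_q for primes p, q (not necessarily distinct). -/
open Subgroup

section AuxLemmas
variable {G : Type*} [Group G]


lemma bad_of_iso {A : Type*} [AddCommGroup A] (K : Subgroup G)
    (e : K ≃* Multiplicative A) (α β : A) (hne : α ≠ β)
    (h1 : ∀ k : ℤ, k • β ≠ α) (h2 : ∀ k : ℤ, k • α ≠ β) :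
    ∃ x y : G, x ≠ y ∧ x * y = y * x ∧ x ∉ zpowers y ∧ y ∉ zpowers x := by
  set a : K := e.symm (Multiplicative.ofAdd α) with ha
  set b : K := e.symm (Multiplicative.ofAdd β) with hb
  have hab : a ≠ b := by
    intro h
    exact hne (by simpa using e.symm.injective h)
  refine ⟨a, b, fun h => hab (Subtype.coe_injective h), ?_, ?_, ?_⟩
  · have : a * b = b * a := by
      apply e.injective
      rw [map_mul, map_mul, mul_comm]
    exact_mod_cast congrArg (Subtype.val) this
  · intro hmem
    obtain ⟨k, hk⟩ := mem_zpowers_iff.mp hmem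
    have : b ^ k = a := Subtype.coe_injective (by push_cast; exact hk)
    apply h1 k
    have := congrArg e this
    rw [map_zpow] at this
    simp only [ha, hb, MulEquiv.apply_symm_apply] at this
    have := congrArg Multiplicative.toAdd this
    rwa [toAdd_zpow, toAdd_ofAdd, toAdd_ofAdd] at this
  · intro hmem
    obtain ⟨k, hk⟩ := mem_zpowers_iff.mp hmem
    have : a ^ k = b := Subtype.coe_injective (by push_cast; exact hk)
    apply h2 k
    have := congrArg e this
    rw [map_zpow] at this
    simp only [ha, hb, MulEquiv.apply_symm_apply] at this
    have := congrArg Multiplicative.toAdd this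
    rwa [toAdd_zpow, toAdd_ofAdd, toAdd_ofAdd] at this

lemma hasIso_int {x : G} (hx : ¬ IsOfFinOrder x) : HasSubgroupIso G (Multiplicative ℤ) := by
  have hinj : Function.Injective (zpowersHom G x) := by
    intro m n h
    have h2 : m.toAdd = n.toAdd := injective_zpow_iff_not_isOfFinOrder.mpr hx h
    exact Multiplicative.toAdd.injective h2
  exact ⟨(zpowersHom G x).range, ⟨(MonoidHom.ofInjective hinj).symm⟩⟩

lemma order_pow_div {x : G} {p : ℕ} (hp : p.Prime) (hx : orderOf x ≠ 0)
    (hdvd : p ∣ orderOf x) : orderOf (x ^ (orderOf x / p)) = p := by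
  set n := orderOf x with hn
  have h1 : (x ^ (n / p)) ^ p = 1 := by
    rw [← pow_mul, Nat.div_mul_cancel hdvd, hn, pow_orderOf_eq_one]
  have h2 : x ^ (n / p) ≠ 1 := by
    intro h
    have hd := orderOf_dvd_of_pow_eq_one h
    rw [← hn] at hd
    have hpos : 0 < n / p := Nat.div_pos (Nat.le_of_dvd (Nat.pos_of_ne_zero hx) hdvd) hp.pos
    have := Nat.le_of_dvd hpos hd
    have := Nat.div_lt_self (Nat.pos_of_ne_zero hx) hp.one_lt
    omega
  rcases hp.eq_one_or_self_of_dvd _ (orderOf_dvd_iff_pow_eq_one.mpr h1) with h | h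
  · exact absurd (orderOf_eq_one_iff.mp h) h2
  · exact h

lemma iso_zmod_prod {u v : G} {p q : ℕ} (hp : p.Prime) (hq : q.Prime)
    (hu : orderOf u = p) (hv : orderOf v = q) (hc : u * v = v * u)
    (htriv : ∀ k l : ℤ, u ^ k = v ^ l → u ^ k = 1) :
    HasSubgroupIso G (Multiplicative (ZMod p × ZMod q)) := by
  haveI : NeZero p := ⟨hp.ne_zero⟩
  haveI : NeZero q := ⟨hq.ne_zero⟩
  have hcm : Commute u v := hc
  have hadd1 : ∀ a b : ZMod p, u ^ (a + b).val = u ^ a.val * u ^ b.val := by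
    intro a b
    have h : u ^ ((a.val + b.val) % p) = u ^ (a.val + b.val) := by
      conv_rhs => rw [← pow_mod_orderOf]
      rw [hu]
    rw [ZMod.val_add, h, pow_add]
  have hadd2 : ∀ a b : ZMod q, v ^ (a + b).val = v ^ a.val * v ^ b.val := by
    intro a b
    have h : v ^ ((a.val + b.val) % q) = v ^ (a.val + b.val) := by
      conv_rhs => rw [← pow_mod_orderOf]
      rw [hv]
    rw [ZMod.val_add, h, pow_add]
  let f : Multiplicative (ZMod p × ZMod q) →* G :=
  { toFun := fun z => u ^ (z.toAdd.1.val) * v ^ (z.toAdd.2.val)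
    map_one' := by simp
    map_mul' := by
      intro z w
      show u ^ ((z.toAdd + w.toAdd).1.val) * v ^ ((z.toAdd + w.toAdd).2.val) = _
      simp only [Prod.fst_add, Prod.snd_add]
      rw [hadd1, hadd2]
      simp only [mul_assoc]
      congr 1
      rw [← mul_assoc, (hcm.pow_pow _ _).eq, mul_assoc] }
  have hinj : Function.Injective f := by
    rw [injective_iff_map_eq_one]
    intro z hz
    have hz' : u ^ (z.toAdd.1.val) * v ^ (z.toAdd.2.val) = 1 := hz
    have hzz : u ^ ((z.toAdd.1.val : ℤ)) = v ^ (-(z.toAdd.2.val : ℤ)) := by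
      rw [zpow_neg, zpow_natCast, zpow_natCast]
      rw [eq_inv_iff_mul_eq_one]
      exact hz'
    have h1 : u ^ ((z.toAdd.1.val : ℤ)) = 1 := htriv _ _ hzz
    have h1' : u ^ (z.toAdd.1.val) = 1 := by rwa [zpow_natCast] at h1
    have hdvd1 : p ∣ z.toAdd.1.val := by
      have h := orderOf_dvd_of_pow_eq_one h1'
      rwa [hu] at h
    have hi : z.toAdd.1 = 0 := by
      rw [← ZMod.val_eq_zero]
      exact Nat.eq_zero_of_dvd_of_lt hdvd1 (ZMod.val_lt z.toAdd.1)
    have h2' : v ^ (z.toAdd.2.val) = 1 := by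
      rw [hi, ZMod.val_zero, pow_zero, one_mul] at hz'
      exact hz'
    have hdvd2 : q ∣ z.toAdd.2.val := by
      have h := orderOf_dvd_of_pow_eq_one h2'
      rwa [hv] at h
    have hj : z.toAdd.2 = 0 := by
      rw [← ZMod.val_eq_zero]
      exact Nat.eq_zero_of_dvd_of_lt hdvd2 (ZMod.val_lt z.toAdd.2)
    have : z.toAdd = 0 := Prod.ext hi hj
    exact Multiplicative.toAdd.injective this
  exact ⟨f.range, ⟨(MonoidHom.ofInjective hinj).symm⟩⟩

lemma key_induction {p : ℕ} (hp : p.Prime) (y : G) (b : ℕ) (hy : orderOf y = p ^ b) :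
    ∀ a : ℕ, a ≤ b → ∀ x : G, x * y = y * x → orderOf x ∣ p ^ a →
      x ∈ zpowers y ∨
        ∃ u v : G, orderOf u = p ∧ orderOf v = p ∧ u * v = v * u ∧ u ∉ zpowers v := by
  intro a
  induction a with
  | zero =>
    intro _ x _ hdvd
    left
    rw [pow_zero, Nat.dvd_one, orderOf_eq_one_iff] at hdvd
    rw [hdvd]
    exact one_mem _
  | succ a ih =>
    intro hab x hxy hdvd
    by_cases hcase : orderOf x ∣ p ^ a
    · exact ih (Nat.le_of_succ_le hab) x hxy hcase
    have hb1 : 1 ≤ b := le_trans (Nat.succ_le_succ (Nat.zero_le a)) hab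
    have hox : orderOf x = p ^ (a + 1) := by
      obtain ⟨c, hc, hoc⟩ := (Nat.dvd_prime_pow hp).mp hdvd
      rcases Nat.lt_or_ge c (a + 1) with h | h
      · exact absurd (hoc ▸ pow_dvd_pow p (Nat.lt_succ_iff.mp h)) hcase
      · exact hoc ▸ congrArg (p ^ ·) (le_antisymm hc h)
    set u := x ^ p ^ a with hudef
    set v := y ^ p ^ (b - 1) with hvdef
    have hcomm : Commute x y := hxy
    have hu : orderOf u = p := by
      have h1 : u ^ p = 1 := by
        rw [hudef, ← pow_mul, ← pow_succ, ← hox, pow_orderOf_eq_one]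
      have h2 : u ≠ 1 := fun h => hcase (orderOf_dvd_of_pow_eq_one h)
      rcases hp.eq_one_or_self_of_dvd _ (orderOf_dvd_iff_pow_eq_one.mpr h1) with h | h
      · exact absurd (orderOf_eq_one_iff.mp h) h2
      · exact h
    have hv : orderOf v = p := by
      have h1 : v ^ p = 1 := by
        rw [hvdef, ← pow_mul, ← pow_succ, Nat.sub_add_cancel hb1, ← hy, pow_orderOf_eq_one]
      have h2 : v ≠ 1 := by
        intro h
        have hd := orderOf_dvd_of_pow_eq_one h
        rw [hy] at hd
        have := Nat.le_of_dvd (pow_pos hp.pos _) hd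
        have h3 : p ^ (b - 1) < p ^ b := Nat.pow_lt_pow_right hp.one_lt (by omega)
        omega
      rcases hp.eq_one_or_self_of_dvd _ (orderOf_dvd_iff_pow_eq_one.mpr h1) with h | h
      · exact absurd (orderOf_eq_one_iff.mp h) h2
      · exact h
    have huv : u * v = v * u := (hcomm.pow_pow _ _).eq
    by_cases hmem : u ∈ zpowers v
    · obtain ⟨k, hk⟩ := mem_zpowers_iff.mp hmem
      set c : G := y ^ p ^ (b - (a + 1)) with hcdef
      set w : G := c ^ k with hwdef
      have hcw : Commute x w⁻¹ := ((hcomm.pow_right _).zpow_right k).inv_right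
      have hwpow : w ^ p ^ a = u := by
        rw [hwdef, ← zpow_natCast (c ^ k) (p ^ a), ← zpow_mul, mul_comm, zpow_mul,
          zpow_natCast, hcdef, ← pow_mul, ← pow_add]
        have : b - (a + 1) + a = b - 1 := by omega
        rw [this, ← hvdef, hk]
      have hx'pow : (x * w⁻¹) ^ p ^ a = 1 := by
        rw [hcw.mul_pow, inv_pow, hwpow, mul_inv_cancel]
      have hx'y : (x * w⁻¹) * y = y * (x * w⁻¹) := by
        have hyw : Commute y w⁻¹ := (((Commute.refl y).pow_right _).zpow_right k).inv_right
        rw [mul_assoc, ← hyw.eq, ← mul_assoc, hxy, mul_assoc]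
      rcases ih (by omega) (x * w⁻¹) hx'y (orderOf_dvd_of_pow_eq_one hx'pow) with h | h
      · left
        have hwmem : w ∈ zpowers y := zpow_mem (pow_mem (mem_zpowers y) _) k
        have : x = (x * w⁻¹) * w := by rw [inv_mul_cancel_right]
        rw [this]
        exact mul_mem h hwmem
      · right; exact h
    · right
      exact ⟨u, v, hu, hv, huv, hmem⟩

lemma zpow_ord_eq_one {u : G} {p : ℕ} (hu : orderOf u = p) : u ^ (p : ℤ) = 1 := by
  rw [zpow_natCast, ← hu, pow_orderOf_eq_one]

lemma triv_of_coprime {u v : G} {p q : ℕ} (hu : orderOf u = p) (hv : orderOf v = q)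
    (hco : Nat.Coprime p q) : ∀ k l : ℤ, u ^ k = v ^ l → u ^ k = 1 := by
  intro k l h
  have h1 : (u ^ k) ^ (p : ℤ) = 1 := by
    rw [← zpow_mul, mul_comm, zpow_mul, zpow_ord_eq_one hu, one_zpow]
  have h2 : (u ^ k) ^ (q : ℤ) = 1 := by
    rw [h, ← zpow_mul, mul_comm, zpow_mul, zpow_ord_eq_one hv, one_zpow]
  obtain ⟨a, c, hac⟩ := Nat.isCoprime_iff_coprime.mpr hco
  calc u ^ k = (u ^ k) ^ (a * (p : ℤ) + c * (q : ℤ)) := by rw [hac, zpow_one]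
    _ = ((u ^ k) ^ (p : ℤ)) ^ a * ((u ^ k) ^ (q : ℤ)) ^ c := by
        rw [zpow_add, mul_comm a, mul_comm c, zpow_mul, zpow_mul]
    _ = 1 := by rw [h1, h2, one_zpow, one_zpow, one_mul]

lemma triv_of_not_mem {u v : G} {p : ℕ} (hp : p.Prime) (hu : orderOf u = p)
    (hmem : u ∉ zpowers v) : ∀ k l : ℤ, u ^ k = v ^ l → u ^ k = 1 := by
  intro k l h
  by_contra hne
  have hndvd : ¬ ((p : ℤ) ∣ k) := by
    intro hd
    apply hne
    rw [← orderOf_dvd_iff_zpow_eq_one, hu]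
    exact hd
  have hco : IsCoprime (p : ℤ) k := by
    rw [Int.isCoprime_iff_gcd_eq_one]
    have : ¬ (p ∣ k.natAbs) := fun hd => hndvd (Int.natCast_dvd.mpr hd)
    exact Nat.Coprime.gcd_eq_one ((Nat.Prime.coprime_iff_not_dvd hp).mpr this)
  obtain ⟨a, c, hac⟩ := hco
  apply hmem
  have hup : u = (u ^ (p : ℤ)) ^ a * (u ^ k) ^ c := by
    conv_lhs => rw [← zpow_one u, ← hac]
    rw [zpow_add, mul_comm a, mul_comm c, zpow_mul, zpow_mul]
  rw [hup, zpow_ord_eq_one hu, one_zpow, one_mul, h]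
  exact zpow_mem (zpow_mem (mem_zpowers v) l) c

lemma disj_of_bad (x y : G) (hne : x ≠ y) (hc : x * y = y * x)
    (hxy : x ∉ zpowers y) (hyx : y ∉ zpowers x) :
    HasSubgroupIso G (Multiplicative ℤ) ∨
      HasSubgroupIso G (Multiplicative (ℤ × ℤ)) ∨
      (∃ p : ℕ, p.Prime ∧ HasSubgroupIso G (Multiplicative (ℤ × ZMod p))) ∨
      ∃ p q : ℕ, p.Prime ∧ q.Prime ∧
        HasSubgroupIso G (Multiplicative (ZMod p × ZMod q)) := by
  by_cases hfx : IsOfFinOrder x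
  swap
  · exact Or.inl (hasIso_int hfx)
  by_cases hfy : IsOfFinOrder y
  swap
  · exact Or.inl (hasIso_int hfy)
  have hox0 : orderOf x ≠ 0 := fun h => (orderOf_eq_zero_iff.mp h) hfx
  have hoy0 : orderOf y ≠ 0 := fun h => (orderOf_eq_zero_iff.mp h) hfy
  have hox1 : orderOf x ≠ 1 := fun h => hxy (orderOf_eq_one_iff.mp h ▸ one_mem _)
  have hoy1 : orderOf y ≠ 1 := fun h => hyx (orderOf_eq_one_iff.mp h ▸ one_mem _)
  have hcomm : Commute x y := hc
  set P : ℕ := (orderOf x).minFac with hPdef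
  have hP : P.Prime := Nat.minFac_prime hox1
  have hPdvd : P ∣ orderOf x := Nat.minFac_dvd _
  by_cases hsingle : ∀ r : ℕ, r.Prime → (r ∣ orderOf x ∨ r ∣ orderOf y) → r = P
  · -- single prime: both orders are powers of P
    have hoxP : orderOf x = P ^ (orderOf x).primeFactorsList.length :=
      Nat.eq_prime_pow_of_unique_prime_dvd hox0 (fun hd hdvd => hsingle _ hd (Or.inl hdvd))
    have hoyP : orderOf y = P ^ (orderOf y).primeFactorsList.length :=
      Nat.eq_prime_pow_of_unique_prime_dvd hoy0 (fun hd hdvd => hsingle _ hd (Or.inr hdvd))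
    set A := (orderOf x).primeFactorsList.length
    set B := (orderOf y).primeFactorsList.length
    rcases le_total A B with hAB | hBA
    · rcases key_induction hP y B hoyP A hAB x hc (hoxP ▸ dvd_rfl) with h | ⟨u, v, hu, hv, huv, hm⟩
      · exact absurd h hxy
      · exact Or.inr (Or.inr (Or.inr ⟨P, P, hP, hP,
          iso_zmod_prod hP hP hu hv huv (triv_of_not_mem hP hu hm)⟩))
    · rcases key_induction hP x A hoxP B hBA y hc.symm (hoyP ▸ dvd_rfl) with h | ⟨u, v, hu, hv, huv, hm⟩
      · exact absurd h hyx
      · exact Or.inr (Or.inr (Or.inr ⟨P, P, hP, hP,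
          iso_zmod_prod hP hP hu hv huv (triv_of_not_mem hP hu hm)⟩))
  · -- two distinct primes exist
    push_neg at hsingle
    obtain ⟨r, hr, hrdvd, hrP⟩ := hsingle
    set u : G := x ^ (orderOf x / P) with hudef
    have hu : orderOf u = P := order_pow_div hP hox0 hPdvd
    have hco : Nat.Coprime P r := (Nat.coprime_primes hP hr).mpr (Ne.symm hrP)
    rcases hrdvd with hrx | hry
    · set v : G := x ^ (orderOf x / r) with hvdef
      have hv : orderOf v = r := order_pow_div hr hox0 hrx
      have huv : u * v = v * u := ((Commute.refl x).pow_pow _ _).eq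
      exact Or.inr (Or.inr (Or.inr ⟨P, r, hP, hr,
        iso_zmod_prod hP hr hu hv huv (triv_of_coprime hu hv hco)⟩))
    · set v : G := y ^ (orderOf y / r) with hvdef
      have hv : orderOf v = r := order_pow_div hr hoy0 hry
      have huv : u * v = v * u := (hcomm.pow_pow _ _).eq
      exact Or.inr (Or.inr (Or.inr ⟨P, r, hP, hr,
        iso_zmod_prod hP hr hu hv huv (triv_of_coprime hu hv hco)⟩))

lemma bad_of_disj
    (hd : HasSubgroupIso G (Multiplicative ℤ) ∨
      HasSubgroupIso G (Multiplicative (ℤ × ℤ)) ∨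
      (∃ p : ℕ, p.Prime ∧ HasSubgroupIso G (Multiplicative (ℤ × ZMod p))) ∨
      ∃ p q : ℕ, p.Prime ∧ q.Prime ∧
        HasSubgroupIso G (Multiplicative (ZMod p × ZMod q))) :
    ∃ x y : G, x ≠ y ∧ x * y = y * x ∧ x ∉ zpowers y ∧ y ∉ zpowers x := by
  rcases hd with ⟨K, ⟨e⟩⟩ | ⟨K, ⟨e⟩⟩ | ⟨p, hp, K, ⟨e⟩⟩ | ⟨p, q, hp, hq, K, ⟨e⟩⟩
  · refine bad_of_iso K e 2 3 (by omega) ?_ ?_ <;>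
      · intro k h
        simp only [smul_eq_mul] at h
        omega
  · refine bad_of_iso K e (1, 0) (0, 1) (by simp [Prod.ext_iff]) ?_ ?_ <;>
      · intro k h
        rw [Prod.ext_iff] at h
        simp only [Prod.smul_fst, Prod.smul_snd, smul_eq_mul, mul_zero, mul_one] at h
        omega
  · haveI : Fact (1 < p) := ⟨hp.one_lt⟩
    refine bad_of_iso K e (1, 0) (0, 1) ?_ ?_ ?_
    · simp [Prod.ext_iff]
    · intro k h
      rw [Prod.ext_iff] at h
      simp only [Prod.smul_fst, smul_eq_mul, mul_zero] at h
      exact absurd h.1 one_ne_zero.symm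
    · intro k h
      rw [Prod.ext_iff] at h
      simp only [Prod.smul_snd, smul_zero] at h
      exact absurd h.2 (zero_ne_one (α := ZMod p))
  · haveI : Fact (1 < p) := ⟨hp.one_lt⟩
    haveI : Fact (1 < q) := ⟨hq.one_lt⟩
    refine bad_of_iso K e (1, 0) (0, 1) ?_ ?_ ?_
    · simp [Prod.ext_iff]
    · intro k h
      rw [Prod.ext_iff] at h
      simp only [Prod.smul_fst, smul_zero] at h
      exact absurd h.1 (zero_ne_one (α := ZMod p))
    · intro k h
      rw [Prod.ext_iff] at h
      simp only [Prod.smul_snd, smul_zero] at h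
      exact absurd h.2 (zero_ne_one (α := ZMod q))

end AuxLemmas

theorem powGraph_eq_comGraph_iff {G : Type*} [Group G] :
    powGraph G = comGraph G ↔
      ¬ (HasSubgroupIso G (Multiplicative ℤ) ∨
        HasSubgroupIso G (Multiplicative (ℤ × ℤ)) ∨
        (∃ p : ℕ, p.Prime ∧ HasSubgroupIso G (Multiplicative (ℤ × ZMod p))) ∨
        ∃ p q : ℕ, p.Prime ∧ q.Prime ∧
          HasSubgroupIso G (Multiplicative (ZMod p × ZMod q))) := by
  have hpc : ∀ x y : G, (powGraph G).Adj x y → (comGraph G).Adj x y := by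
    rintro x y ⟨h1, h2 | h2⟩
    · obtain ⟨k, hk⟩ := mem_zpowers_iff.mp h2
      exact ⟨h1, by rw [← hk, ← zpow_add_one, ← zpow_one_add, add_comm]⟩
    · obtain ⟨k, hk⟩ := mem_zpowers_iff.mp h2
      exact ⟨h1, by rw [← hk, ← zpow_one_add, ← zpow_add_one, add_comm]⟩
  constructor
  · intro heq hd
    obtain ⟨x, y, hne, hc, hxy, hyx⟩ := bad_of_disj hd
    have hcom : (comGraph G).Adj x y := ⟨hne, hc⟩
    rw [← heq] at hcom
    rcases hcom.2 with h | h
    exacts [hxy h, hyx h]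
  · intro hd
    by_contra hne
    apply hd
    have h : ¬ ∀ x y : G, (powGraph G).Adj x y ↔ (comGraph G).Adj x y := by
      intro h
      exact hne (SimpleGraph.ext (by funext x y; exact propext (h x y)))
    push_neg at h
    obtain ⟨x, y, hxy⟩ := h
    rcases hxy with ⟨hpow, hncom⟩ | ⟨hnpow, hne', hc⟩
    · exact absurd (hpc x y hpow) hncom
    have hor : x ∉ zpowers y ∧ y ∉ zpowers x := by
      by_contra hcon
      rw [not_and_or, not_not, not_not] at hcon
      exact hnpow ⟨hne', by tauto⟩
    exact disj_of_bad x y hne' hc hor.1 hor.2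
end

section
/- In the locally quaternion group Q_{2^∞}, the power graph, the enhanced power graph, and the commuting graph are all equal. -/
open Subgroup

/-- The Prüfer 2-group, realised as the subgroup of `ℂˣ` of `2 ^ n`-th roots of unity. -/
def Prufer2 : Subgroup ℂˣ where
  carrier := {z | ∃ n : ℕ, z ^ (2 ^ n) = 1}
  one_mem' := ⟨0, one_pow _⟩
  inv_mem' := by rintro z ⟨n, hn⟩; exact ⟨n, by rw [inv_pow, hn, inv_one]⟩
  mul_mem' := by
    rintro z w ⟨n, hn⟩ ⟨m, hm⟩
    refine ⟨n + m, ?_⟩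
    rw [mul_pow, pow_add, pow_mul, hn, one_pow, one_mul, mul_comm (2 ^ n) (2 ^ m),
      pow_mul, hm, one_pow]

lemma pow_two_chain_aux (a b : ℂˣ) (hdvd : orderOf a ∣ orderOf b) (hb : orderOf b ≠ 0) :
    a ∈ Subgroup.zpowers b := by
  have hb' : IsPrimitiveRoot (b : ℂ) (orderOf b) := by
    have h := IsPrimitiveRoot.orderOf (b : ℂ)
    rwa [orderOf_units] at h
  have ha : (a : ℂ) ^ (orderOf b) = 1 := by
    have h : a ^ orderOf b = 1 := orderOf_dvd_iff_pow_eq_one.mp hdvd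
    simpa using congrArg Units.val h
  haveI : NeZero (orderOf b) := ⟨hb⟩
  obtain ⟨i, _, hi⟩ := hb'.eq_pow_of_pow_eq_one ha
  refine mem_zpowers_iff.mpr ⟨(i : ℤ), Units.ext ?_⟩
  push_cast
  rw [← hi]
  norm_num

lemma pow_two_chain (u v : ℂˣ) (hu : ∃ n : ℕ, u ^ (2 ^ n) = 1)
    (hv : ∃ m : ℕ, v ^ (2 ^ m) = 1) :
    u ∈ Subgroup.zpowers v ∨ v ∈ Subgroup.zpowers u := by
  obtain ⟨n, hn⟩ := hu
  obtain ⟨m, hm⟩ := hv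
  obtain ⟨i, _, hiu⟩ := (Nat.dvd_prime_pow Nat.prime_two).mp (orderOf_dvd_of_pow_eq_one hn)
  obtain ⟨j, _, hjv⟩ := (Nat.dvd_prime_pow Nat.prime_two).mp (orderOf_dvd_of_pow_eq_one hm)
  rcases le_total i j with h | h
  · refine Or.inl (pow_two_chain_aux u v ?_ ?_)
    · rw [hiu, hjv]; exact pow_dvd_pow 2 h
    · rw [hjv]; positivity
  · refine Or.inr (pow_two_chain_aux v u ?_ ?_)
    · rw [hiu, hjv]; exact pow_dvd_pow 2 h
    · rw [hiu]; positivity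

lemma zpowers_isCyclic {G : Type*} [Group G] (g : G) : IsCyclic (zpowers g) := by
  refine ⟨⟨g, mem_zpowers g⟩, ?_⟩
  rintro ⟨y, hy⟩
  obtain ⟨k, hk⟩ := mem_zpowers_iff.mp hy
  refine mem_zpowers_iff.mpr ⟨k, Subtype.ext ?_⟩
  simpa using hk

lemma closure_pair_isCyclic {G : Type*} [Group G] {a b : G} (h : a ∈ zpowers b) :
    IsCyclic (closure ({a, b} : Set G)) := by
  have hcl : closure ({a, b} : Set G) = zpowers b := by
    apply le_antisymm
    · rw [Subgroup.closure_le]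
      intro q hq
      rcases Set.mem_insert_iff.mp hq with h1 | h1
      · rw [h1]; exact h
      · rw [Set.mem_singleton_iff.mp h1]; exact mem_zpowers b
    · rw [zpowers_eq_closure]
      exact Subgroup.closure_mono (by simp)
  rw [hcl]
  exact zpowers_isCyclic b

lemma closure_pair_comm {G : Type*} [Group G] {a b : G}
    (h : IsCyclic (closure ({a, b} : Set G))) : a * b = b * a := by
  obtain ⟨⟨g, hg⟩, hgen⟩ := h
  have haK : a ∈ closure ({a, b} : Set G) := subset_closure (Set.mem_insert _ _)
  have hbK : b ∈ closure ({a, b} : Set G) := subset_closure (Set.mem_insert_of_mem _ rfl)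
  obtain ⟨ka, hka⟩ := mem_zpowers_iff.mp (hgen ⟨a, haK⟩)
  obtain ⟨kb, hkb⟩ := mem_zpowers_iff.mp (hgen ⟨b, hbK⟩)
  have ha' : a = g ^ ka := by
    have := congrArg Subtype.val hka
    simpa using this.symm
  have hb' : b = g ^ kb := by
    have := congrArg Subtype.val hkb
    simpa using this.symm
  rw [ha', hb', ← zpow_add, ← zpow_add, add_comm]

/-- For the locally quaternion group `Q_{2^∞}` (presented as generated by a copy `C` of the
Prüfer 2-group and an element `x` with `x⁻¹ c x = c⁻¹` and `x ^ 2 = z`, the unique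
element of order 2 of `C`), the power, enhanced power and commuting graphs coincide. -/
theorem locally_quaternion_graphs_eq
    {Q : Type*} [Group Q] (C : Subgroup Q) (hC : Nonempty (C ≃* Prufer2))
    (x z : Q) (hzC : z ∈ C) (hz : orderOf z = 2)
    (hzuniq : ∀ w ∈ C, orderOf w = 2 → w = z)
    (hx : x ^ 2 = z) (hconj : ∀ c ∈ C, x⁻¹ * c * x = c⁻¹)
    (hgen : Subgroup.closure ((C : Set Q) ∪ {x}) = ⊤) :
    powGraph Q = epowGraph Q ∧ epowGraph Q = comGraph Q := by
  obtain ⟨e⟩ := hC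
  -- C is commutative
  have hcomm : ∀ a ∈ C, ∀ b ∈ C, a * b = b * a := by
    intro a ha b hb
    have h2 : (⟨a, ha⟩ : C) * ⟨b, hb⟩ = (⟨b, hb⟩ : C) * ⟨a, ha⟩ :=
      e.injective (by rw [map_mul, map_mul, mul_comm])
    exact congrArg Subtype.val h2
  -- chain property in C
  have hchain : ∀ a ∈ C, ∀ b ∈ C, a ∈ zpowers b ∨ b ∈ zpowers a := by
    intro a ha b hb
    have hu : ∃ n : ℕ, (e ⟨a, ha⟩ : ℂˣ) ^ (2 ^ n) = 1 := (e ⟨a, ha⟩).2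
    have hv : ∃ m : ℕ, (e ⟨b, hb⟩ : ℂˣ) ^ (2 ^ m) = 1 := (e ⟨b, hb⟩).2
    have key : ∀ (p : Q) (hp : p ∈ C) (q : Q) (hq : q ∈ C),
        (e ⟨p, hp⟩ : ℂˣ) ∈ Subgroup.zpowers (e ⟨q, hq⟩ : ℂˣ) → p ∈ zpowers q := by
      intro p hp q hq hmem
      obtain ⟨k, hk⟩ := mem_zpowers_iff.mp hmem
      have h1 : e ⟨q, hq⟩ ^ k = e ⟨p, hp⟩ := by
        apply Subtype.ext
        simpa using hk
      rw [← map_zpow] at h1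
      exact mem_zpowers_iff.mpr ⟨k, congrArg Subtype.val (e.injective h1)⟩
    rcases pow_two_chain _ _ hu hv with h | h
    · exact Or.inl (key a ha b hb h)
    · exact Or.inr (key b hb a ha h)
  -- basic relations
  have hxx : x * x = z := by rw [← pow_two x]; exact hx
  have hxc : ∀ c ∈ C, x * c = c⁻¹ * x := by
    intro c hc
    have h := hconj c⁻¹ (C.inv_mem hc)
    rw [inv_inv] at h
    conv_lhs => rw [← h]
    group
  -- structure: every element is in C or of the form c * x
  have hstruct : ∀ q : Q, q ∈ C ∨ ∃ c ∈ C, q = c * x := by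
    intro q
    let D : Subgroup Q :=
      { carrier := {q | q ∈ C ∨ ∃ c ∈ C, q = c * x}
        one_mem' := Or.inl C.one_mem
        mul_mem' := by
          rintro p q (hp | ⟨c, hc, rfl⟩) (hq | ⟨d, hd, rfl⟩)
          · exact Or.inl (C.mul_mem hp hq)
          · exact Or.inr ⟨p * d, C.mul_mem hp hd, by group⟩
          · refine Or.inr ⟨c * q⁻¹, C.mul_mem hc (C.inv_mem hq), ?_⟩
            rw [mul_assoc, hxc q hq]; group
          · refine Or.inl ?_
            have h1 : c * x * (d * x) = c * d⁻¹ * z := by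
              rw [mul_assoc c x (d * x), ← mul_assoc x d x, hxc d hd, ← hxx]; group
            rw [h1]
            exact C.mul_mem (C.mul_mem hc (C.inv_mem hd)) hzC
        inv_mem' := by
          rintro p (hp | ⟨c, hc, rfl⟩)
          · exact Or.inl (C.inv_mem hp)
          · refine Or.inr ⟨z⁻¹ * c, C.mul_mem (C.inv_mem hzC) hc, ?_⟩
            have h1 : x * c⁻¹ = c * x := by
              have h2 := hxc c⁻¹ (C.inv_mem hc)
              rwa [inv_inv] at h2
            calc (c * x)⁻¹ = x⁻¹ * c⁻¹ := by group
              _ = z⁻¹ * (x * c⁻¹) := by rw [show x⁻¹ = z⁻¹ * x by rw [← hxx]; group, mul_assoc]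
              _ = z⁻¹ * c * x := by rw [h1, mul_assoc] }
    have hsub : ((C : Set Q) ∪ {x}) ⊆ D := by
      rintro q (hq | hq)
      · exact Or.inl hq
      · rw [Set.mem_singleton_iff] at hq
        exact Or.inr ⟨1, C.one_mem, by rw [hq, one_mul]⟩
    have hle : Subgroup.closure ((C : Set Q) ∪ {x}) ≤ D := (Subgroup.closure_le D).mpr hsub
    rw [hgen] at hle
    exact hle (mem_top q)
  -- conjugation by elements outside C inverts C
  have hconj2 : ∀ c ∈ C, ∀ a ∈ C, (c * x)⁻¹ * a * (c * x) = a⁻¹ := by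
    intro c hc a ha
    have h1 : (c * x)⁻¹ * a * (c * x) = x⁻¹ * (c⁻¹ * a * c) * x := by group
    have h2 : c⁻¹ * a * c = a := by
      rw [mul_assoc, hcomm a ha c hc, ← mul_assoc, inv_mul_cancel, one_mul]
    rw [h1, h2]
    exact hconj a ha
  -- squares of elements outside C
  have hsq : ∀ c ∈ C, (c * x) * (c * x) = z := by
    intro c hc
    calc (c * x) * (c * x) = c * (x * c) * x := by group
      _ = c * (c⁻¹ * x) * x := by rw [hxc c hc]
      _ = x * x := by group
      _ = z := hxx
  haveI : Fact (Nat.Prime 2) := ⟨Nat.prime_two⟩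
  -- the main implication: commuting elements are powers of one another
  have main : ∀ a b : Q, a ≠ b → a * b = b * a → a ∈ zpowers b ∨ b ∈ zpowers a := by
    -- first a helper for the mixed case
    have mixed : ∀ a ∈ C, ∀ d ∈ C, a * (d * x) = (d * x) * a → a ∈ zpowers (d * x) := by
      intro a ha d hd hab
      have h1 : (d * x)⁻¹ * a * (d * x) = a⁻¹ := hconj2 d hd a ha
      have h2 : (d * x)⁻¹ * a * (d * x) = a := by
        rw [mul_assoc, hab, ← mul_assoc, inv_mul_cancel, one_mul]
      have hainv : a⁻¹ = a := by rw [← h1, h2]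
      by_cases h1a : a = 1
      · rw [h1a]; exact Subgroup.one_mem _
      · have ho : orderOf a = 2 := by
          refine orderOf_eq_prime ?_ h1a
          rw [pow_two]
          nth_rewrite 1 [← hainv]
          exact inv_mul_cancel a
        have haz : a = z := hzuniq a ha ho
        refine mem_zpowers_iff.mpr ⟨((2 : ℕ) : ℤ), ?_⟩
        rw [zpow_natCast, pow_two, hsq d hd, haz]
    intro a b hne hab
    rcases hstruct a with ha | ⟨c, hc, rfl⟩
    · rcases hstruct b with hb | ⟨d, hd, rfl⟩
      · exact hchain a ha b hb
      · exact Or.inl (mixed a ha d hd hab)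
    · rcases hstruct b with hb | ⟨d, hd, rfl⟩
      · exact Or.inr (mixed b hb c hc hab.symm)
      · -- both outside C
        right
        have hk : d * x = (d * c⁻¹) * (c * x) := by group
        set k := d * c⁻¹ with hkdef
        have hkC : k ∈ C := C.mul_mem hd (C.inv_mem hc)
        have h1 : (c * x)⁻¹ * k * (c * x) = k⁻¹ := hconj2 c hc k hkC
        have h3 : (c * x) * k = k * (c * x) := by
          have h4 : (c * x) * (k * (c * x)) = (k * (c * x)) * (c * x) := by
            rw [← hk]; exact hab
          have h5 : (c * x) * k * (c * x) = k * (c * x) * (c * x) := by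
            rw [mul_assoc]; exact h4
          exact mul_right_cancel h5
        have h2 : (c * x)⁻¹ * k * (c * x) = k := by
          rw [mul_assoc, ← h3, ← mul_assoc, inv_mul_cancel, one_mul]
        have hkinv : k⁻¹ = k := by rw [← h1, h2]
        have hkne : k ≠ 1 := by
          intro hk1
          rw [hk1, one_mul] at hk
          exact hne hk.symm
        have ho : orderOf k = 2 := by
          refine orderOf_eq_prime ?_ hkne
          rw [pow_two]
          nth_rewrite 1 [← hkinv]
          exact inv_mul_cancel k
        have hkz : k = z := hzuniq k hkC ho
        refine mem_zpowers_iff.mpr ⟨((3 : ℕ) : ℤ), ?_⟩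
        rw [zpow_natCast, hk, hkz]
        calc (c * x) ^ 3 = ((c * x) * (c * x)) * (c * x) := by
              rw [pow_succ, pow_two]
          _ = z * (c * x) := by rw [hsq c hc]
  constructor
  · ext a b
    show (a ≠ b ∧ _) ↔ (a ≠ b ∧ _)
    constructor
    · rintro ⟨hne, h | h⟩
      · exact ⟨hne, closure_pair_isCyclic h⟩
      · refine ⟨hne, ?_⟩
        rw [Set.pair_comm]
        exact closure_pair_isCyclic h
    · rintro ⟨hne, h⟩
      exact ⟨hne, main a b hne (closure_pair_comm h)⟩
  · ext a b
    show (a ≠ b ∧ _) ↔ (a ≠ b ∧ _)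
    constructor
    · rintro ⟨hne, h⟩
      exact ⟨hne, closure_pair_comm h⟩
    · rintro ⟨hne, h⟩
      refine ⟨hne, ?_⟩
      rcases main a b hne h with h' | h'
      · exact closure_pair_isCyclic h'
      · rw [Set.pair_comm]
        exact closure_pair_isCyclic h'
end

section
/- For the locally dihedral group D_{2^∞}, the power graph equals the enhanced power graph, but the enhanced power graph is a proper subgraph of the commuting graph. -/
open Subgroup

section Aux
variable {G : Type*} [Group G]

lemma mem_zpowers_nat {g x : G} {N : ℕ} (hN : N ≠ 0) (hg : g ^ N = 1)
    (hx : x ∈ zpowers g) : ∃ a : ℕ, g ^ a = x := by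
  obtain ⟨k, hk⟩ := mem_zpowers_iff.mp hx
  refine ⟨(k % (N : ℤ)).toNat, ?_⟩
  have hN' : (N : ℤ) ≠ 0 := by exact_mod_cast hN
  have h1 : g ^ (k % (N : ℤ)) = g ^ k := by
    conv_rhs => rw [← Int.emod_add_mul_ediv k (N : ℤ)]
    rw [zpow_add, zpow_mul, zpow_natCast, hg, one_zpow, mul_one]
  rw [← hk, ← h1, ← zpow_natCast, Int.toNat_of_nonneg (Int.emod_nonneg _ hN')]

lemma isCyclic_zpowers (g : G) : IsCyclic (zpowers g) := by
  refine ⟨⟨⟨g, mem_zpowers g⟩, fun x => ?_⟩⟩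
  obtain ⟨k, hk⟩ := x.2
  exact mem_zpowers_iff.mpr ⟨k, Subtype.ext (by simpa using hk)⟩

lemma exists_gen {K : Subgroup G} (h : IsCyclic K) : ∃ g ∈ K, ∀ x ∈ K, x ∈ zpowers g := by
  obtain ⟨⟨g, hg⟩, hgen⟩ := h.exists_generator
  refine ⟨g, hg, fun x hx => ?_⟩
  obtain ⟨k, hk⟩ := hgen ⟨x, hx⟩
  exact mem_zpowers_iff.mpr ⟨k, by simpa using congrArg Subtype.val hk⟩

lemma closure_pair_cyclic' {x y : G} (h : x ∈ zpowers y) :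
    IsCyclic (closure ({x, y} : Set G)) := by
  have he : closure ({x, y} : Set G) = zpowers y := by
    apply le_antisymm
    · rw [closure_le]
      rintro z hz
      simp only [Set.mem_insert_iff, Set.mem_singleton_iff] at hz
      rcases hz with rfl | rfl
      · exact h
      · exact mem_zpowers _
    · exact zpowers_le.mpr (subset_closure (Set.mem_insert_of_mem x rfl))
  rw [he]
  exact _root_.isCyclic_zpowers y

lemma closure_pair_cyclic {x y : G} (h : x ∈ zpowers y ∨ y ∈ zpowers x) :
    IsCyclic (closure ({x, y} : Set G)) := by
  rcases h with h | h
  · exact closure_pair_cyclic' h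
  · rw [Set.pair_comm]
    exact closure_pair_cyclic' h

lemma mem_zpowers_sq {g x : G} (hg : g ^ 2 = 1) (hx : x ∈ zpowers g) : x = 1 ∨ x = g := by
  obtain ⟨a, rfl⟩ := mem_zpowers_nat two_ne_zero hg hx
  rcases Nat.even_or_odd a with ⟨m, rfl⟩ | ⟨m, rfl⟩
  · left; rw [← two_mul, pow_mul, hg, one_pow]
  · right; rw [pow_add, pow_mul, hg, one_pow, one_mul, pow_one]

lemma core_arith (n a b : ℕ) (ha : a ≠ 0) (hb : b ≠ 0)
    (hij : b.factorization 2 ≤ a.factorization 2) :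
    ∃ k : ℕ, a ≡ k * b [MOD 2 ^ n] := by
  rcases Nat.eq_zero_or_pos n with rfl | hn
  · exact ⟨0, by rw [pow_zero]; exact Nat.modEq_one⟩
  set i := a.factorization 2 with hi
  set j := b.factorization 2 with hj
  have ha' : 2 ^ i * (a / 2 ^ i) = a := Nat.ordProj_mul_ordCompl_eq_self a 2
  have hb' : 2 ^ j * (b / 2 ^ j) = b := Nat.ordProj_mul_ordCompl_eq_self b 2
  set a0 := a / 2 ^ i
  set b0 := b / 2 ^ j
  have hb0 : ¬ (2 ∣ b0) := Nat.not_dvd_ordCompl Nat.prime_two hb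
  have hcop : Nat.Coprime b0 (2 ^ n) :=
    (((Nat.Prime.coprime_iff_not_dvd Nat.prime_two).mpr hb0).symm).pow_right n
  have h2n : 1 < 2 ^ n := Nat.one_lt_two_pow_iff.mpr (by omega)
  obtain ⟨m, -, hm⟩ := Nat.exists_mul_mod_eq_one_of_coprime hcop h2n
  have hmod : b0 * m ≡ 1 [MOD 2 ^ n] := by
    unfold Nat.ModEq
    rw [hm, Nat.mod_eq_of_lt h2n]
  refine ⟨2 ^ (i - j) * a0 * m, ?_⟩
  have h2 : 2 ^ (i - j) * 2 ^ j = 2 ^ i := by rw [← pow_add, Nat.sub_add_cancel hij]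
  have key : 2 ^ (i - j) * a0 * m * b = a * (b0 * m) := by
    conv_rhs => rw [← ha']
    rw [← hb', ← h2]
    ring
  rw [key]
  exact ((Nat.ModEq.mul_left a hmod).trans (by rw [mul_one])).symm

lemma zpowers_total {g x y : G} (n : ℕ) (hg : g ^ 2 ^ n = 1)
    (hx : x ∈ zpowers g) (hy : y ∈ zpowers g) :
    x ∈ zpowers y ∨ y ∈ zpowers x := by
  have hN : (2 : ℕ) ^ n ≠ 0 := pow_ne_zero n two_ne_zero
  obtain ⟨a, rfl⟩ := mem_zpowers_nat hN hg hx
  obtain ⟨b, rfl⟩ := mem_zpowers_nat hN hg hy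
  have hdvd : orderOf g ∣ 2 ^ n := orderOf_dvd_of_pow_eq_one hg
  rcases eq_or_ne a 0 with rfl | ha
  · left; rw [pow_zero]; exact one_mem _
  rcases eq_or_ne b 0 with rfl | hb
  · right; rw [pow_zero]; exact one_mem _
  rcases le_total (b.factorization 2) (a.factorization 2) with h | h
  · obtain ⟨k, hk⟩ := core_arith n a b ha hb h
    left
    have he : g ^ a = (g ^ b) ^ k := by
      rw [← pow_mul, pow_eq_pow_iff_modEq]
      exact ((hk.trans (by rw [mul_comm])).of_dvd hdvd)
    exact mem_zpowers_iff.mpr ⟨(k : ℤ), by rw [zpow_natCast, ← he]⟩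
  · obtain ⟨k, hk⟩ := core_arith n b a hb ha h
    right
    have he : g ^ b = (g ^ a) ^ k := by
      rw [← pow_mul, pow_eq_pow_iff_modEq]
      exact ((hk.trans (by rw [mul_comm])).of_dvd hdvd)
    exact mem_zpowers_iff.mpr ⟨(k : ℤ), by rw [zpow_natCast, ← he]⟩

end Aux

/-- For the locally dihedral group `D_{2^∞}` (presented as generated by a copy `C` of the
Prüfer 2-group and an element `s` with `s ^ 2 = 1` and `s c s = c⁻¹`), the power graph
equals the enhanced power graph, which is a proper subgraph of the commuting graph. -/
theorem locally_dihedral_graphs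
    {D : Type*} [Group D] (C : Subgroup D) (hC : Nonempty (C ≃* Prufer2))
    (s : D) (hs : s ^ 2 = 1) (hconj : ∀ c ∈ C, s * c * s = c⁻¹)
    (hgen : Subgroup.closure ((C : Set D) ∪ {s}) = ⊤) :
    powGraph D = epowGraph D ∧
      epowGraph D ≤ comGraph D ∧ epowGraph D ≠ comGraph D := by
  obtain ⟨φ⟩ := hC
  have hss : s * s = 1 := by rw [← pow_two]; exact hs
  have hsinv : s⁻¹ = s := inv_eq_of_mul_eq_one_left hss
  -- every element of D is in C or in Cs
  have hD : ∀ x : D, x ∈ C ∨ x * s ∈ C := by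
    have key : ∀ x ∈ closure ((C : Set D) ∪ {s}), x ∈ C ∨ x * s ∈ C := by
      intro x hx
      induction hx using closure_induction with
      | mem w hw =>
        rcases hw with hw | hw
        · exact Or.inl hw
        · right
          rw [Set.mem_singleton_iff] at hw
          subst hw
          rw [hss]
          exact C.one_mem
      | one => exact Or.inl C.one_mem
      | mul a b _ _ ha hb =>
        rcases ha with ha | ha
        · rcases hb with hb | hb
          · exact Or.inl (C.mul_mem ha hb)
          · right; rw [mul_assoc]; exact C.mul_mem ha hb
        · rcases hb with hb | hb
          · right
            have e : a * b * s = (a * s) * (s⁻¹ * b * s) := by group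
            rw [hsinv] at e
            rw [e, hconj b hb]
            exact C.mul_mem ha (C.inv_mem hb)
          · left
            have e : a * b = (a * s) * (s⁻¹ * (b * s) * s⁻¹) := by group
            rw [hsinv] at e
            rw [e, hconj (b * s) hb]
            exact C.mul_mem ha (C.inv_mem hb)
      | inv a _ ha =>
        rcases ha with ha | ha
        · exact Or.inl (C.inv_mem ha)
        · right
          have e : a⁻¹ * s = s * (a * s)⁻¹ * s := by group
          rw [e, hconj _ (C.inv_mem ha), inv_inv]
          exact ha
    intro x
    exact key x (by rw [hgen]; trivial)
  -- elements of C have 2-power order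
  have hord : ∀ c ∈ C, ∃ n : ℕ, c ^ 2 ^ n = 1 := by
    intro c hc
    obtain ⟨n, hn⟩ := (φ ⟨c, hc⟩).2
    refine ⟨n, ?_⟩
    have h1 : (⟨c, hc⟩ : C) ^ 2 ^ n = 1 := by
      apply φ.injective
      rw [map_pow, map_one]
      exact Subtype.ext (by push_cast; exact hn)
    simpa using congrArg Subtype.val h1
  -- C is commutative
  have hcomm : ∀ a ∈ C, ∀ b ∈ C, a * b = b * a := by
    intro a ha b hb
    have h1 : (⟨a, ha⟩ : C) * ⟨b, hb⟩ = ⟨b, hb⟩ * ⟨a, ha⟩ :=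
      φ.injective (by rw [map_mul, map_mul, mul_comm])
    simpa using congrArg Subtype.val h1
  -- an element of order 4 in ℂˣ
  have hsC : s ∉ C := by
    intro hsmem
    have hinv : ∀ c ∈ C, c⁻¹ = c := by
      intro c hc
      rw [← hconj c hc, hcomm s hsmem c hc, mul_assoc, hss, mul_one]
    set zI : ℂˣ := Units.mk0 Complex.I Complex.I_ne_zero with hzI
    have hz4 : zI ^ (2 ^ 2 : ℕ) = 1 := by
      ext
      push_cast [hzI]
      exact Complex.I_pow_four
    have hz2 : zI ^ (2 : ℕ) ≠ 1 := by
      intro hcon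
      have : (Complex.I : ℂ) ^ (2 : ℕ) = 1 := by
        have := congrArg Units.val hcon
        push_cast [hzI] at this
        exact this
      rw [Complex.I_sq] at this
      norm_num at this
    set zP : Prufer2 := ⟨zI, 2, hz4⟩ with hzP
    set c : C := φ.symm zP with hcdef
    have hcc : (c : D)⁻¹ = (c : D) := hinv _ c.2
    have hc1 : c * c = 1 := by
      have h2 : (c : D) * c = 1 := by nth_rewrite 1 [← hcc]; exact inv_mul_cancel _
      exact Subtype.ext (by push_cast; exact h2)
    have : zP * zP = 1 := by
      have := congrArg φ hc1
      rwa [map_mul, map_one, hcdef, MulEquiv.apply_symm_apply] at this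
    apply hz2
    rw [pow_two]
    simpa using congrArg Subtype.val this
  refine ⟨?_, ?_, ?_⟩
  · -- powGraph = epowGraph
    ext x y
    show (x ≠ y ∧ (x ∈ zpowers y ∨ y ∈ zpowers x)) ↔
      (x ≠ y ∧ IsCyclic (closure ({x, y} : Set D)))
    constructor
    · rintro ⟨hne, h⟩
      exact ⟨hne, closure_pair_cyclic h⟩
    · rintro ⟨hne, hcyc⟩
      refine ⟨hne, ?_⟩
      obtain ⟨g, hgK, hgen'⟩ := exists_gen hcyc
      have hx : x ∈ zpowers g := hgen' x (subset_closure (Set.mem_insert x _))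
      have hy : y ∈ zpowers g := hgen' y (subset_closure (Set.mem_insert_of_mem x rfl))
      rcases hD g with hg | hg
      · obtain ⟨n, hn⟩ := hord g hg
        exact zpowers_total n hn hx hy
      · have hg2 : g ^ 2 = 1 := by
          have e : g * g = (g * s) * (s⁻¹ * (g * s) * s⁻¹) := by group
          rw [hsinv, hconj _ hg] at e
          rw [pow_two, e, mul_inv_cancel]
        rcases mem_zpowers_sq hg2 hx with rfl | rfl
        · left; exact one_mem _
        · rcases mem_zpowers_sq hg2 hy with rfl | rfl
          · right; exact one_mem _
          · exact absurd rfl hne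
  · -- epowGraph ≤ comGraph
    rintro x y ⟨hne, hcyc⟩
    refine ⟨hne, ?_⟩
    obtain ⟨g, hgK, hgen'⟩ := exists_gen hcyc
    obtain ⟨a, ha⟩ := mem_zpowers_iff.mp (hgen' x (subset_closure (Set.mem_insert x _)))
    obtain ⟨b, hb⟩ := mem_zpowers_iff.mp (hgen' y (subset_closure (Set.mem_insert_of_mem x rfl)))
    rw [← ha, ← hb, ← zpow_add, ← zpow_add, add_comm]
  · -- epowGraph ≠ comGraph
    intro heq
    set zI : ℂˣ := Units.mk0 Complex.I Complex.I_ne_zero with hzI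
    have hz4 : zI ^ (4 : ℕ) = 1 := by
      ext
      push_cast [hzI]
      exact Complex.I_pow_four
    have hz2 : zI ^ (2 : ℕ) ≠ 1 := by
      intro hcon
      have h2 : (Complex.I : ℂ) ^ (2 : ℕ) = 1 := by
        have := congrArg Units.val hcon
        push_cast [hzI] at this
        exact this
      rw [Complex.I_sq] at h2
      norm_num at h2
    have hzP4 : (zI ^ (2 : ℕ)) ^ (2 ^ 1 : ℕ) = 1 := by
      rw [← pow_mul]
      norm_num
      exact hz4
    set zP : Prufer2 := ⟨zI ^ (2 : ℕ), 1, hzP4⟩ with hzP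
    have hzP2 : zP * zP = 1 := by
      apply Subtype.ext
      push_cast
      rw [← pow_add]
      norm_num
      exact hz4
    have hzP1 : zP ≠ 1 := by
      intro hcon
      apply hz2
      exact congrArg Subtype.val hcon
    set c : C := φ.symm zP with hcdef
    set cD : D := (c : D) with hcDdef
    have hcmem : cD ∈ C := c.2
    have hc1 : c * c = 1 := by rw [hcdef, ← map_mul, hzP2, map_one]
    have hc2 : cD * cD = 1 := by
      have := congrArg Subtype.val hc1
      simpa [hcDdef] using this
    have hcne1 : cD ≠ 1 := by
      intro hcon
      apply hzP1
      have hc1' : c = 1 := Subtype.ext (by simpa [hcDdef] using hcon)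
      calc zP = φ c := by rw [hcdef, MulEquiv.apply_symm_apply]
        _ = 1 := by rw [hc1', map_one]
    have hsne1 : s ≠ 1 := fun h => hsC (h ▸ C.one_mem)
    have hcs_ne : cD ≠ s := fun h => hsC (h ▸ hcmem)
    have hcv : cD⁻¹ = cD := inv_eq_of_mul_eq_one_left hc2
    have hsc : s * cD = cD * s := by
      have h := hconj cD hcmem
      rw [hcv] at h
      have h' : s * cD * s * s = cD * s := congrArg (· * s) h
      rw [mul_assoc, hss, mul_one] at h'
      exact h'
    have hadj : (comGraph D).Adj cD s := ⟨hcs_ne, hsc.symm⟩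
    rw [← heq] at hadj
    obtain ⟨-, hcyc⟩ := hadj
    have h1x : ∀ x : D, cD * (cD * x) = x := fun x => by rw [← mul_assoc, hc2, one_mul]
    have h2x : ∀ x : D, s * (s * x) = x := fun x => by rw [← mul_assoc, hss, one_mul]
    have h3x : ∀ x : D, s * (cD * x) = cD * (s * x) := fun x => by
      rw [← mul_assoc, hsc, mul_assoc]
    have hcs2 : (cD * s) * (cD * s) = 1 := by
      rw [mul_assoc, h3x, h1x, hss]
    have hinvcs : (cD * s)⁻¹ = cD * s := inv_eq_of_mul_eq_one_left hcs2
    have hmem4 : ∀ z ∈ closure ({cD, s} : Set D), z = 1 ∨ z = cD ∨ z = s ∨ z = cD * s := by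
      intro z hz
      induction hz using closure_induction with
      | mem w hw =>
        simp only [Set.mem_insert_iff, Set.mem_singleton_iff] at hw
        rcases hw with rfl | rfl
        · exact Or.inr (Or.inl rfl)
        · exact Or.inr (Or.inr (Or.inl rfl))
      | one => exact Or.inl rfl
      | mul a b _ _ ha hb =>
        rcases ha with rfl | rfl | rfl | rfl <;> rcases hb with rfl | rfl | rfl | rfl <;>
          simp [mul_assoc, h1x, h2x, h3x, hc2, hss, hsc]
      | inv a _ ha =>
        rcases ha with rfl | rfl | rfl | rfl <;> simp [hcv, hsinv, hinvcs]
    obtain ⟨g, hgK, hgen'⟩ := exists_gen hcyc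
    have hcDz : cD ∈ zpowers g := hgen' cD (subset_closure (Set.mem_insert _ _))
    have hsz : s ∈ zpowers g := hgen' s (subset_closure (Set.mem_insert_of_mem _ rfl))
    have hg2 : g ^ 2 = 1 := by
      rcases hmem4 g hgK with rfl | rfl | rfl | rfl
      · exact one_pow 2
      · rw [pow_two]; exact hc2
      · exact hs
      · rw [pow_two]; exact hcs2
    rcases mem_zpowers_sq hg2 hcDz with h | h
    · exact hcne1 h
    · rcases mem_zpowers_sq hg2 hsz with h' | h'
      · exact hsne1 h'
      · exact hcs_ne (h.trans h'.symm)
end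

section
/- The power graph of the locally quaternion group Q_{2^∞} is isomorphic (as a graph) to the commuting graph of the locally dihedral group D_{2^∞}. -/
open Subgroup

lemma aux_pow_mem_zpowers {G : Type*} [Group G] (g : G) (E i j : ℕ)
    (hE : g ^ E = 1) (h : Nat.gcd j E ∣ i) : g ^ i ∈ zpowers (g ^ j) := by
  obtain ⟨w, hw⟩ := h
  have hbez : (Nat.gcd j E : ℤ) = (j : ℤ) * Int.gcdA (j : ℤ) (E : ℤ) + (E : ℤ) * Int.gcdB (j : ℤ) (E : ℤ) := by
    have h1 := Int.gcd_eq_gcd_ab (j : ℤ) (E : ℤ)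
    have h2 : Int.gcd (j : ℤ) (E : ℤ) = Nat.gcd j E := by
      simp [Int.gcd]
    rw [← h2]; exact_mod_cast h1
  have hgE : g ^ (E : ℤ) = 1 := by simpa [zpow_natCast] using hE
  refine mem_zpowers_iff.mpr ⟨Int.gcdA (j : ℤ) (E : ℤ) * w, ?_⟩
  have hji : (j : ℤ) * (Int.gcdA (j : ℤ) (E : ℤ) * w)
      = (i : ℤ) - (E : ℤ) * (Int.gcdB (j : ℤ) (E : ℤ) * w) := by
    have hiw : (i : ℤ) = (Nat.gcd j E : ℤ) * w := by exact_mod_cast hw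
    rw [hiw, hbez]; ring
  calc (g ^ j) ^ (Int.gcdA (j : ℤ) (E : ℤ) * w)
      = g ^ ((j : ℤ) * (Int.gcdA (j : ℤ) (E : ℤ) * w)) := by
        rw [← zpow_natCast g j, ← zpow_mul]
    _ = g ^ ((i : ℤ) - (E : ℤ) * (Int.gcdB (j : ℤ) (E : ℤ) * w)) := by rw [hji]
    _ = g ^ (i : ℤ) * (g ^ ((E : ℤ) * (Int.gcdB (j : ℤ) (E : ℤ) * w)))⁻¹ := by
        rw [zpow_sub]
    _ = g ^ i := by rw [zpow_mul, hgE, one_zpow, inv_one, mul_one, zpow_natCast]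

lemma aux_prufer_comparable (a b : ℂˣ) (ha : a ∈ Prufer2) (hb : b ∈ Prufer2) :
    a ∈ zpowers b ∨ b ∈ zpowers a := by
  obtain ⟨n, hn⟩ := ha; obtain ⟨m, hm⟩ := hb
  set N := max n m with hN
  set E : ℕ := 2 ^ N with hE
  have haN : a ^ E = 1 := by
    obtain ⟨k, hk⟩ := pow_dvd_pow 2 (le_max_left n m)
    rw [hE, hk, pow_mul, hn, one_pow]
  have hbN : b ^ E = 1 := by
    obtain ⟨k, hk⟩ := pow_dvd_pow 2 (le_max_right n m)
    rw [hE, hk, pow_mul, hm, one_pow]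
  have hE0 : E ≠ 0 := pow_ne_zero _ two_ne_zero
  haveI : NeZero E := ⟨hE0⟩
  have hprim := Complex.isPrimitiveRoot_exp E hE0
  set ζ : ℂ := Complex.exp (2 * Real.pi * Complex.I / E) with hζ
  have hζ0 : ζ ≠ 0 := Complex.exp_ne_zero _
  set ζu : ℂˣ := Units.mk0 ζ hζ0 with hζu
  have hζE : ζu ^ E = 1 := by
    ext; push_cast [Units.val_pow_eq_pow_val]
    simpa [hζu] using hprim.pow_eq_one
  have haC : (a : ℂ) ^ E = 1 := by
    have := congrArg Units.val haN; simpa [Units.val_pow_eq_pow_val] using this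
  have hbC : (b : ℂ) ^ E = 1 := by
    have := congrArg Units.val hbN; simpa [Units.val_pow_eq_pow_val] using this
  obtain ⟨i, hiE, hi⟩ := hprim.eq_pow_of_pow_eq_one haC
  obtain ⟨j, hjE, hj⟩ := hprim.eq_pow_of_pow_eq_one hbC
  have hau : a = ζu ^ i := by ext; simpa [hζu, Units.val_pow_eq_pow_val] using hi.symm
  have hbu : b = ζu ^ j := by ext; simpa [hζu, Units.val_pow_eq_pow_val] using hj.symm
  obtain ⟨ki, -, hki⟩ := (Nat.dvd_prime_pow Nat.prime_two).mp (Nat.gcd_dvd_right i E)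
  obtain ⟨kj, -, hkj⟩ := (Nat.dvd_prime_pow Nat.prime_two).mp (Nat.gcd_dvd_right j E)
  rcases le_total kj ki with hle | hle
  · left
    rw [hau, hbu]
    exact aux_pow_mem_zpowers ζu E i j hζE
      (dvd_trans (by rw [hki, hkj]; exact pow_dvd_pow 2 hle) (Nat.gcd_dvd_left i E))
  · right
    rw [hau, hbu]
    exact aux_pow_mem_zpowers ζu E j i hζE
      (dvd_trans (by rw [hki, hkj]; exact pow_dvd_pow 2 hle) (Nat.gcd_dvd_left j E))

lemma aux_units_sq (u : ℂˣ) (h : u * u = 1) : u = 1 ∨ u = -1 := by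
  have hval : (u : ℂ) * (u : ℂ) = 1 := by
    have := congrArg Units.val h; simpa using this
  have : ((u : ℂ) - 1) * ((u : ℂ) + 1) = 0 := by ring_nf; linear_combination hval
  rcases mul_eq_zero.mp this with h1 | h1
  · left; ext; simpa [sub_eq_zero] using h1
  · right; ext; rw [Units.val_neg, Units.val_one]; exact eq_neg_of_add_eq_zero_left h1

lemma aux_neg_one_mem : (-1 : ℂˣ) ∈ Prufer2 := ⟨1, by ext; norm_num⟩

lemma aux_exists_sq_ne_one : ∃ u : ℂˣ, u ∈ Prufer2 ∧ u * u ≠ 1 := by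
  refine ⟨⟨Complex.I, -Complex.I, by simp [Complex.I_mul_I], by simp [Complex.I_mul_I]⟩, ⟨2, ?_⟩, ?_⟩
  · ext; push_cast [Units.val_pow_eq_pow_val]
    norm_num [pow_succ, Complex.I_mul_I]
  · intro h
    have := congrArg Units.val h
    simp [Complex.I_mul_I] at this
    norm_num at this

lemma aux_conj_flip {G : Type*} [Group G] (C : Subgroup G) (t : G)
    (hconj : ∀ c ∈ C, t⁻¹ * c * t = c⁻¹) : ∀ c ∈ C, t * c * t⁻¹ = c⁻¹ := by
  intro c hc
  have h := hconj c⁻¹ (inv_mem hc)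
  rw [inv_inv] at h
  have h2 : t * (t⁻¹ * c⁻¹ * t) * t⁻¹ = c⁻¹ := by group
  rw [h] at h2
  exact h2

lemma aux_coset {G : Type*} [Group G] (C : Subgroup G) (t w : G) (hw : w ∈ C)
    (htt : t * t = w)
    (hconj : ∀ c ∈ C, t⁻¹ * c * t = c⁻¹)
    (hgen : Subgroup.closure ((C : Set G) ∪ {t}) = ⊤) :
    ∀ q : G, q ∈ C ∨ q * t⁻¹ ∈ C := by
  have hflip := aux_conj_flip C t hconj
  let K : Subgroup G :=
    { carrier := {q | q ∈ C ∨ q * t⁻¹ ∈ C}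
      one_mem' := Or.inl (one_mem C)
      mul_mem' := by
        rintro a b (ha | ha) (hb | hb)
        · exact Or.inl (mul_mem ha hb)
        · refine Or.inr ?_
          rw [mul_assoc]
          exact mul_mem ha hb
        · refine Or.inr ?_
          have h2 : (a * t⁻¹) * (t * b * t⁻¹) = a * b * t⁻¹ := by group
          rw [← h2, hflip b hb]
          exact mul_mem ha (inv_mem hb)
        · refine Or.inl ?_
          have h2 : ((a * t⁻¹) * (t * (b * t⁻¹) * t⁻¹)) * (t * t) = a * b := by group
          rw [← h2, hflip _ hb, htt]
          exact mul_mem (mul_mem ha (inv_mem hb)) hw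
      inv_mem' := by
        rintro a (ha | ha)
        · exact Or.inl (inv_mem ha)
        · refine Or.inr ?_
          have h2 : ((t⁻¹ * (a * t⁻¹)⁻¹ * t)) * (t * t)⁻¹ = a⁻¹ * t⁻¹ := by group
          rw [← h2, hconj _ (inv_mem ha), inv_inv, htt]
          exact mul_mem ha (inv_mem hw) }
  intro q
  have hle : Subgroup.closure ((C : Set G) ∪ {t}) ≤ K := by
    rw [Subgroup.closure_le]
    rintro y (hy | hy)
    · exact Or.inl hy
    · rcases hy with rfl
      refine Or.inr ?_
      simpa using (one_mem C)
  have : q ∈ K := hle (by rw [hgen]; trivial)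
  exact this

lemma aux_sq {G : Type*} [Group G] (C : Subgroup G) (t w : G)
    (htt : t * t = w)
    (hconj : ∀ c ∈ C, t⁻¹ * c * t = c⁻¹)
    {q : G} (hq : q * t⁻¹ ∈ C) : q * q = w := by
  have hflip := aux_conj_flip C t hconj
  have h2 : ((q * t⁻¹) * (t * (q * t⁻¹) * t⁻¹)) * (t * t) = q * q := by group
  rw [← h2, hflip _ hq, htt]
  group
/-- The power graph of the locally quaternion group `Q_{2^∞}` is isomorphic to the
commuting graph of the locally dihedral group `D_{2^∞}`. -/
theorem powGraph_locally_quaternion_iso_comGraph_locally_dihedral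
    {Q : Type*} [Group Q] (CQ : Subgroup Q) (hCQ : Nonempty (CQ ≃* Prufer2))
    (x z : Q) (hzC : z ∈ CQ) (hz : orderOf z = 2)
    (hzuniq : ∀ w ∈ CQ, orderOf w = 2 → w = z)
    (hx : x ^ 2 = z) (hconjQ : ∀ c ∈ CQ, x⁻¹ * c * x = c⁻¹)
    (hgenQ : Subgroup.closure ((CQ : Set Q) ∪ {x}) = ⊤)
    {D : Type*} [Group D] (CD : Subgroup D) (hCD : Nonempty (CD ≃* Prufer2))
    (s : D) (hs : s ^ 2 = 1) (hconjD : ∀ c ∈ CD, s * c * s = c⁻¹)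
    (hgenD : Subgroup.closure ((CD : Set D) ∪ {s}) = ⊤) :
    Nonempty (powGraph Q ≃g comGraph D) := by
  classical
  obtain ⟨e1⟩ := hCQ
  obtain ⟨e2⟩ := hCD
  set ψ : CQ ≃* CD := e1.trans e2.symm with hψdef
  -- ## basic facts about Q
  have hz1 : z ≠ 1 := by
    intro h; rw [h, orderOf_one] at hz; norm_num at hz
  have hzz : z * z = 1 := by
    have h := pow_orderOf_eq_one z
    rwa [hz, pow_two] at h
  have hxx : x * x = z := by rw [← pow_two]; exact hx
  have hxmemC : x ∉ CQ := by
    intro hxC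
    have h := hconjQ x hxC
    rw [inv_mul_cancel, one_mul] at h
    exact hz1 (by rw [← hxx]; exact mul_eq_one_iff_eq_inv.mpr h)
  have hcoset : ∀ q : Q, q ∈ CQ ∨ q * x⁻¹ ∈ CQ :=
    aux_coset CQ x z hzC hxx hconjQ hgenQ
  have hQstep : ∀ q : Q, q ∉ CQ → q * x⁻¹ ∈ CQ := fun q h => (hcoset q).resolve_left h
  have hsqQ : ∀ q : Q, q ∉ CQ → q * q = z := fun q h =>
    aux_sq CQ x z hxx hconjQ (hQstep q h)
  have hznmul : ∀ q : Q, q ∉ CQ → z * q ∉ CQ := by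
    intro q h hmem
    exact h (by simpa using mul_mem (inv_mem hzC) hmem)
  have hcompQ : ∀ a b : Q, a ∈ CQ → b ∈ CQ → a ∈ zpowers b ∨ b ∈ zpowers a := by
    intro a b ha hb
    have key : ∀ (u v : CQ), ((e1 u : Prufer2) : ℂˣ) ∈ zpowers ((e1 v : Prufer2) : ℂˣ) →
        (u : Q) ∈ zpowers (v : Q) := by
      intro u v h
      obtain ⟨k, hk⟩ := mem_zpowers_iff.mp h
      refine mem_zpowers_iff.mpr ⟨k, ?_⟩
      have h1 : (e1 v) ^ k = e1 u := by
        apply Subtype.ext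
        simpa [SubgroupClass.coe_zpow] using hk
      have h2 : v ^ k = u := by
        apply e1.injective
        rw [map_zpow]; exact h1
      have h3 := congrArg (Subtype.val) h2
      simpa [SubgroupClass.coe_zpow] using h3
    rcases aux_prufer_comparable (e1 ⟨a, ha⟩) (e1 ⟨b, hb⟩)
        (SetLike.coe_mem _) (SetLike.coe_mem _) with h | h
    · exact Or.inl (key ⟨a, ha⟩ ⟨b, hb⟩ h)
    · exact Or.inr (key ⟨b, hb⟩ ⟨a, ha⟩ h)
  -- ## basic facts about D
  have hss : s * s = 1 := by rw [← pow_two]; exact hs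
  have hsinv : s⁻¹ = s := inv_eq_of_mul_eq_one_right hss
  have hconjD' : ∀ c ∈ CD, s⁻¹ * c * s = c⁻¹ := by
    intro c hc; rw [hsinv]; exact hconjD c hc
  have hcommD : ∀ a b : D, a ∈ CD → b ∈ CD → a * b = b * a := by
    intro a b ha hb
    have h : (⟨a, ha⟩ : CD) * ⟨b, hb⟩ = ⟨b, hb⟩ * ⟨a, ha⟩ := by
      apply e2.injective
      rw [map_mul, map_mul]
      exact mul_comm _ _
    exact congrArg Subtype.val h
  have hsC : s ∉ CD := by
    intro hsD
    obtain ⟨u, hu, hu2⟩ := aux_exists_sq_ne_one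
    set c : CD := e2.symm ⟨u, hu⟩ with hcdef
    have hcomm := hcommD s (c : D) hsD (SetLike.coe_mem c)
    have h1 := hconjD (c : D) (SetLike.coe_mem c)
    rw [hcomm, mul_assoc, hss, mul_one] at h1
    have h2 : (c : D) * (c : D) = 1 := mul_eq_one_iff_eq_inv.mpr h1
    have h3 : c * c = 1 := Subtype.ext h2
    have h4 : (⟨u, hu⟩ : Prufer2) * ⟨u, hu⟩ = 1 := by
      have := congrArg e2 h3
      rwa [map_mul, map_one, hcdef, MulEquiv.apply_symm_apply] at this
    exact hu2 (congrArg Subtype.val h4)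
  have hcosetD : ∀ d : D, d ∈ CD ∨ d * s⁻¹ ∈ CD :=
    aux_coset CD s 1 (one_mem CD) hss hconjD' hgenD
  have hDstep : ∀ d : D, d ∉ CD → d * s⁻¹ ∈ CD := fun d h => (hcosetD d).resolve_left h
  have hsqD : ∀ d : D, d ∉ CD → d * d = 1 := fun d h =>
    aux_sq CD s 1 hss hconjD' (hDstep d h)
  -- ## the central involution of D
  set zD : D := ((ψ ⟨z, hzC⟩ : CD) : D) with hzDdef
  have hzDC : zD ∈ CD := SetLike.coe_mem _
  have hzDzD : zD * zD = 1 := by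
    have h1 : (⟨z, hzC⟩ : CQ) * ⟨z, hzC⟩ = 1 := Subtype.ext hzz
    have h2 : ψ ⟨z, hzC⟩ * ψ ⟨z, hzC⟩ = 1 := by rw [← map_mul, h1, map_one]
    have h3 := congrArg Subtype.val h2
    simpa [hzDdef] using h3
  have hzD1 : zD ≠ 1 := by
    intro h
    apply hz1
    have h1 : ψ ⟨z, hzC⟩ = 1 := Subtype.ext h
    have h2 : (⟨z, hzC⟩ : CQ) = 1 := by
      apply ψ.injective; rw [h1, map_one]
    exact congrArg Subtype.val h2
  have he1z : ((e1 ⟨z, hzC⟩ : Prufer2) : ℂˣ) = -1 := by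
    have h1 : (⟨z, hzC⟩ : CQ) * ⟨z, hzC⟩ = 1 := Subtype.ext hzz
    have h2 : (e1 ⟨z, hzC⟩) * (e1 ⟨z, hzC⟩) = 1 := by rw [← map_mul, h1, map_one]
    have h3 : ((e1 ⟨z, hzC⟩ : Prufer2) : ℂˣ) * ((e1 ⟨z, hzC⟩ : Prufer2) : ℂˣ) = 1 :=
      congrArg Subtype.val h2
    rcases aux_units_sq _ h3 with h | h
    · exfalso
      apply hz1
      have h4 : e1 ⟨z, hzC⟩ = 1 := Subtype.ext h
      have h5 : (⟨z, hzC⟩ : CQ) = 1 := by apply e1.injective; rw [h4, map_one]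
      exact congrArg Subtype.val h5
    · exact h
  have huniqD : ∀ w, w ∈ CD → w * w = 1 → w = 1 ∨ w = zD := by
    intro w hw hww
    have h1 : ((e2 ⟨w, hw⟩ : Prufer2) : ℂˣ) * ((e2 ⟨w, hw⟩ : Prufer2) : ℂˣ) = 1 := by
      have ha : (⟨w, hw⟩ : CD) * ⟨w, hw⟩ = 1 := Subtype.ext hww
      have hb : (e2 ⟨w, hw⟩) * (e2 ⟨w, hw⟩) = 1 := by rw [← map_mul, ha, map_one]
      exact congrArg Subtype.val hb
    rcases aux_units_sq _ h1 with h | h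
    · left
      have h2 : (⟨w, hw⟩ : CD) = 1 := by
        apply e2.injective; rw [map_one]; exact Subtype.ext h
      exact congrArg Subtype.val h2
    · right
      have h3 : (⟨w, hw⟩ : CD) = ψ ⟨z, hzC⟩ := by
        apply e2.injective
        have h4 : e2 (ψ ⟨z, hzC⟩) = e1 ⟨z, hzC⟩ := by
          rw [hψdef]; simp
        rw [h4]
        exact Subtype.ext (by rw [h, he1z])
      rw [hzDdef]
      exact congrArg Subtype.val h3
  have hzDinv : zD⁻¹ = zD := inv_eq_of_mul_eq_one_right hzDzD
  have hzDs : s * zD = zD * s := by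
    have h := hconjD zD hzDC
    rw [hzDinv] at h
    have h2 : (s * zD * s) * s = zD * s := by rw [h]
    rw [show (s * zD * s) * s = s * zD * (s * s) by group, hss, mul_one] at h2
    exact h2
  have hzDcentral : ∀ d : D, zD * d = d * zD := by
    intro d
    by_cases hd : d ∈ CD
    · exact hcommD zD d hzDC hd
    · have hc := hDstep d hd
      have hdd : d = (d * s⁻¹) * s := by group
      rw [hdd]
      calc zD * ((d * s⁻¹) * s) = (zD * (d * s⁻¹)) * s := by group
        _ = ((d * s⁻¹) * zD) * s := by rw [hcommD zD (d * s⁻¹) hzDC hc]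
        _ = (d * s⁻¹) * (zD * s) := by group
        _ = (d * s⁻¹) * (s * zD) := by rw [← hzDs]
        _ = ((d * s⁻¹) * s) * zD := by group
  -- ## powGraph Q model
  have hz2' : z ^ (2 : ℤ) = 1 := by
    rw [show (2 : ℤ) = 1 + 1 by norm_num, zpow_add, zpow_one]; exact hzz
  have hz2z : ∀ m : ℤ, z ^ m = 1 ∨ z ^ m = z := by
    intro m
    rcases Int.even_or_odd m with ⟨r, hr⟩ | ⟨r, hr⟩
    · left; rw [hr, show r + r = 2 * r by ring, zpow_mul, hz2', one_zpow]
    · right; rw [hr, zpow_add, zpow_mul, hz2', one_zpow, one_mul, zpow_one]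
  have hb2 : ∀ b : Q, b ∉ CQ → b ^ (2 : ℤ) = z := by
    intro b hb
    rw [show (2 : ℤ) = 1 + 1 by norm_num, zpow_add, zpow_one]
    exact hsqQ b hb
  have hkeyQ : ∀ a b : Q, a ≠ b → a ∈ zpowers b →
      ((a ∈ CQ ∧ b ∈ CQ) ∨ a = 1 ∨ a = z ∨ b = 1 ∨ b = z ∨
        (a ∉ CQ ∧ b ∉ CQ ∧ b = z * a)) := by
    intro a b hne hab
    obtain ⟨k, hk⟩ := mem_zpowers_iff.mp hab
    by_cases hbC : b ∈ CQ
    · exact Or.inl ⟨hk ▸ zpow_mem hbC k, hbC⟩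
    · rcases Int.even_or_odd k with ⟨r, hr⟩ | ⟨r, hr⟩
      · have ha : a = z ^ r := by
          rw [← hk, hr, show r + r = 2 * r by ring, zpow_mul, hb2 b hbC]
        rcases hz2z r with h | h
        · right; left; rw [ha, h]
        · right; right; left; rw [ha, h]
      · have ha : a = z ^ r * b := by
          rw [← hk, hr, zpow_add, zpow_one, zpow_mul, hb2 b hbC]
        rcases hz2z r with h | h
        · exact absurd (by rw [ha, h, one_mul]) hne
        · have haz : a = z * b := by rw [ha, h]
          refine Or.inr (Or.inr (Or.inr (Or.inr (Or.inr ⟨?_, hbC, ?_⟩))))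
          · rw [haz]; exact hznmul b hbC
          · rw [haz, ← mul_assoc, hzz, one_mul]
  have hMsymmQ : ∀ a b : Q,
      ((a ∈ CQ ∧ b ∈ CQ) ∨ a = 1 ∨ a = z ∨ b = 1 ∨ b = z ∨
        (a ∉ CQ ∧ b ∉ CQ ∧ b = z * a)) →
      ((b ∈ CQ ∧ a ∈ CQ) ∨ b = 1 ∨ b = z ∨ a = 1 ∨ a = z ∨
        (b ∉ CQ ∧ a ∉ CQ ∧ a = z * b)) := by
    intro a b h
    rcases h with ⟨h1, h2⟩ | h | h | h | h | ⟨h1, h2, h3⟩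
    · exact Or.inl ⟨h2, h1⟩
    · exact Or.inr (Or.inr (Or.inr (Or.inl h)))
    · exact Or.inr (Or.inr (Or.inr (Or.inr (Or.inl h))))
    · exact Or.inr (Or.inl h)
    · exact Or.inr (Or.inr (Or.inl h))
    · refine Or.inr (Or.inr (Or.inr (Or.inr (Or.inr ⟨h2, h1, ?_⟩))))
      rw [h3, ← mul_assoc, hzz, one_mul]
  have lemA : ∀ a b : Q, (powGraph Q).Adj a b ↔ (a ≠ b ∧
      ((a ∈ CQ ∧ b ∈ CQ) ∨ a = 1 ∨ a = z ∨ b = 1 ∨ b = z ∨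
        (a ∉ CQ ∧ b ∉ CQ ∧ b = z * a))) := by
    intro a b
    constructor
    · rintro ⟨hne, h | h⟩
      · exact ⟨hne, hkeyQ a b hne h⟩
      · exact ⟨hne, hMsymmQ b a (hkeyQ b a hne.symm h)⟩
    · rintro ⟨hne, h⟩
      refine ⟨hne, ?_⟩
      rcases h with ⟨ha, hb⟩ | h1 | h1 | h1 | h1 | ⟨ha, hb, h1⟩
      · exact hcompQ a b ha hb
      · subst h1; left; exact one_mem _
      · by_cases hbC : b ∈ CQ
        · rw [h1]; exact hcompQ z b hzC hbC
        · left; rw [h1]; exact mem_zpowers_iff.mpr ⟨2, hb2 b hbC⟩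
      · subst h1; right; exact one_mem _
      · by_cases haC : a ∈ CQ
        · rw [h1]; exact hcompQ a z haC hzC
        · right; rw [h1]; exact mem_zpowers_iff.mpr ⟨2, hb2 a haC⟩
      · subst h1
        right
        refine mem_zpowers_iff.mpr ⟨3, ?_⟩
        rw [show (3 : ℤ) = 2 + 1 by norm_num, zpow_add, zpow_one, hb2 a ha]
  -- ## comGraph D model
  have hhalf : ∀ a b : D, a ∈ CD → b ∉ CD → a * b = b * a → a * a = 1 := by
    intro a b haC hbC hcomm
    obtain ⟨c, hcC, hb'⟩ : ∃ c, c ∈ CD ∧ b = c * s := ⟨b * s⁻¹, hDstep b hbC, by group⟩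
    subst hb'
    have h3 : c * (a * s) = c * (s * a) := by
      calc c * (a * s) = (c * a) * s := (mul_assoc c a s).symm
        _ = (a * c) * s := by rw [hcommD c a hcC haC]
        _ = a * (c * s) := mul_assoc a c s
        _ = (c * s) * a := hcomm
        _ = c * (s * a) := mul_assoc c s a
    have h2 : a * s = s * a := mul_left_cancel h3
    have h4 := hconjD a haC
    rw [← h2, mul_assoc, hss, mul_one] at h4
    exact mul_eq_one_iff_eq_inv.mpr h4
  have lemB : ∀ a b : D, (comGraph D).Adj a b ↔ (a ≠ b ∧
      ((a ∈ CD ∧ b ∈ CD) ∨ a = 1 ∨ a = zD ∨ b = 1 ∨ b = zD ∨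
        (a ∉ CD ∧ b ∉ CD ∧ b = zD * a))) := by
    intro a b
    constructor
    · rintro ⟨hne, hcomm⟩
      refine ⟨hne, ?_⟩
      by_cases haC : a ∈ CD <;> by_cases hbC : b ∈ CD
      · exact Or.inl ⟨haC, hbC⟩
      · rcases huniqD a haC (hhalf a b haC hbC hcomm) with h | h
        · exact Or.inr (Or.inl h)
        · exact Or.inr (Or.inr (Or.inl h))
      · rcases huniqD b hbC (hhalf b a hbC haC hcomm.symm) with h | h
        · exact Or.inr (Or.inr (Or.inr (Or.inl h)))
        · exact Or.inr (Or.inr (Or.inr (Or.inr (Or.inl h))))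
      · obtain ⟨c1, hc1, ha'⟩ : ∃ c, c ∈ CD ∧ a = c * s := ⟨a * s⁻¹, hDstep a haC, by group⟩
        obtain ⟨c2, hc2, hb'⟩ : ∃ c, c ∈ CD ∧ b = c * s := ⟨b * s⁻¹, hDstep b hbC, by group⟩
        have hab : a * b = c1 * c2⁻¹ := by
          rw [ha', hb']
          calc (c1 * s) * (c2 * s) = c1 * (s * c2 * s) := by group
            _ = c1 * c2⁻¹ := by rw [hconjD c2 hc2]
        have hba : b * a = c2 * c1⁻¹ := by
          rw [ha', hb']
          calc (c2 * s) * (c1 * s) = c2 * (s * c1 * s) := by group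
            _ = c2 * c1⁻¹ := by rw [hconjD c1 hc1]
        have heq : c1 * c2⁻¹ = c2 * c1⁻¹ := by rw [← hab, ← hba]; exact hcomm
        have hww : (c1 * c2⁻¹) * (c1 * c2⁻¹) = 1 := by
          calc (c1 * c2⁻¹) * (c1 * c2⁻¹) = (c1 * c2⁻¹) * (c2 * c1⁻¹) := by rw [← heq]
            _ = 1 := by group
        rcases huniqD _ (mul_mem hc1 (inv_mem hc2)) hww with h | h
        · exact absurd (by rw [ha', hb', mul_inv_eq_one.mp h]) hne
        · refine Or.inr (Or.inr (Or.inr (Or.inr (Or.inr ⟨haC, hbC, ?_⟩))))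
          have hc12 : c1 = zD * c2 := by rw [← h]; group
          have ha2 : a = zD * b := by rw [ha', hb', hc12]; group
          rw [ha2, ← mul_assoc, hzDzD, one_mul]
    · rintro ⟨hne, h⟩
      refine ⟨hne, ?_⟩
      rcases h with ⟨ha, hb⟩ | h1 | h1 | h1 | h1 | ⟨ha, hb, h1⟩
      · exact hcommD a b ha hb
      · subst h1; rw [one_mul, mul_one]
      · subst h1; exact hzDcentral b
      · subst h1; rw [one_mul, mul_one]
      · subst h1; exact (hzDcentral a).symm
      · subst h1; rw [← mul_assoc, ← hzDcentral a]
  -- ## the bijection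
  let f : Q → D := fun q =>
    if h : q ∈ CQ then ((ψ ⟨q, h⟩ : CD) : D)
    else ((ψ ⟨q * x⁻¹, hQstep q h⟩ : CD) : D) * s
  let g : D → Q := fun d =>
    if h : d ∈ CD then ((ψ.symm ⟨d, h⟩ : CQ) : Q)
    else ((ψ.symm ⟨d * s⁻¹, hDstep d h⟩ : CQ) : Q) * x
  have hfpos : ∀ (q : Q) (h : q ∈ CQ), f q = ((ψ ⟨q, h⟩ : CD) : D) := fun q h => dif_pos h
  have hfneg : ∀ (q : Q) (h : q ∉ CQ),
      f q = ((ψ ⟨q * x⁻¹, hQstep q h⟩ : CD) : D) * s := fun q h => dif_neg h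
  have hgpos : ∀ (d : D) (h : d ∈ CD), g d = ((ψ.symm ⟨d, h⟩ : CQ) : Q) := fun d h => dif_pos h
  have hgneg : ∀ (d : D) (h : d ∉ CD),
      g d = ((ψ.symm ⟨d * s⁻¹, hDstep d h⟩ : CQ) : Q) * x := fun d h => dif_neg h
  have hfC : ∀ q : Q, q ∈ CQ ↔ f q ∈ CD := by
    intro q
    constructor
    · intro h; rw [hfpos q h]; exact SetLike.coe_mem _
    · intro h
      by_contra hq
      rw [hfneg q hq] at h
      have hmm := mul_mem (inv_mem (SetLike.coe_mem (ψ ⟨q * x⁻¹, hQstep q hq⟩))) h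
      exact hsC (by simpa using hmm)
  have hgf : ∀ q : Q, g (f q) = q := by
    intro q
    by_cases h : q ∈ CQ
    · rw [hfpos q h, hgpos _ (SetLike.coe_mem _)]
      have he : (⟨((ψ ⟨q, h⟩ : CD) : D), SetLike.coe_mem _⟩ : CD) = ψ ⟨q, h⟩ := rfl
      rw [he, MulEquiv.symm_apply_apply]
    · have hm' : ((ψ ⟨q * x⁻¹, hQstep q h⟩ : CD) : D) * s ∉ CD := by
        rw [← hfneg q h]
        exact fun hh => h ((hfC q).mpr hh)
      rw [hfneg q h, hgneg _ hm']
      have he : (⟨(((ψ ⟨q * x⁻¹, hQstep q h⟩ : CD) : D) * s) * s⁻¹, hDstep _ hm'⟩ : CD)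
          = ψ ⟨q * x⁻¹, hQstep q h⟩ := Subtype.ext (mul_inv_cancel_right _ _)
      rw [he, MulEquiv.symm_apply_apply]
      show (q * x⁻¹) * x = q
      rw [inv_mul_cancel_right]
  have hgC : ∀ d : D, d ∈ CD ↔ g d ∈ CQ := by
    intro d
    constructor
    · intro h; rw [hgpos d h]; exact SetLike.coe_mem _
    · intro h
      by_contra hd
      rw [hgneg d hd] at h
      have hmm := mul_mem (inv_mem (SetLike.coe_mem (ψ.symm ⟨d * s⁻¹, hDstep d hd⟩))) h
      exact hxmemC (by simpa using hmm)
  have hfg : ∀ d : D, f (g d) = d := by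
    intro d
    by_cases h : d ∈ CD
    · rw [hgpos d h, hfpos _ (SetLike.coe_mem _)]
      have he : (⟨((ψ.symm ⟨d, h⟩ : CQ) : Q), SetLike.coe_mem _⟩ : CQ) = ψ.symm ⟨d, h⟩ := rfl
      rw [he, MulEquiv.apply_symm_apply]
    · have hm' : ((ψ.symm ⟨d * s⁻¹, hDstep d h⟩ : CQ) : Q) * x ∉ CQ := by
        rw [← hgneg d h]
        exact fun hh => h ((hgC d).mpr hh)
      rw [hgneg d h, hfneg _ hm']
      have he : (⟨(((ψ.symm ⟨d * s⁻¹, hDstep d h⟩ : CQ) : Q) * x) * x⁻¹, hQstep _ hm'⟩ : CQ)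
          = ψ.symm ⟨d * s⁻¹, hDstep d h⟩ := Subtype.ext (mul_inv_cancel_right _ _)
      rw [he, MulEquiv.apply_symm_apply]
      show (d * s⁻¹) * s = d
      rw [inv_mul_cancel_right]
  have hinj : Function.Injective f := by
    intro a b hab
    rw [← hgf a, ← hgf b, hab]
  have hfone : f 1 = 1 := by
    rw [hfpos 1 (one_mem CQ)]
    have he : (⟨(1 : Q), one_mem CQ⟩ : CQ) = 1 := rfl
    rw [he, map_one]
    rfl
  have hfz : f z = zD := by rw [hfpos z hzC, hzDdef]
  have hfzmul : ∀ q : Q, q ∉ CQ → f (z * q) = zD * f q := by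
    intro q h
    have hzq : z * q ∉ CQ := hznmul q h
    rw [hfneg _ hzq, hfneg q h]
    have he : (⟨(z * q) * x⁻¹, hQstep _ hzq⟩ : CQ) = ⟨z, hzC⟩ * ⟨q * x⁻¹, hQstep q h⟩ :=
      Subtype.ext (by show (z * q) * x⁻¹ = z * (q * x⁻¹); group)
    rw [he, map_mul, hzDdef]
    push_cast
    rw [mul_assoc]
  -- ## transfer of the model
  have e_one : ∀ q : Q, q = 1 ↔ f q = 1 := by
    intro q
    constructor
    · intro h; rw [h, hfone]
    · intro h; exact hinj (h.trans hfone.symm)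
  have e_z : ∀ q : Q, q = z ↔ f q = zD := by
    intro q
    constructor
    · intro h; rw [h, hfz]
    · intro h; exact hinj (h.trans hfz.symm)
  have e_pair : ∀ a b : Q,
      (a ∉ CQ ∧ b ∉ CQ ∧ b = z * a) ↔ (f a ∉ CD ∧ f b ∉ CD ∧ f b = zD * f a) := by
    intro a b
    constructor
    · rintro ⟨h1, h2, h3⟩
      refine ⟨fun hh => h1 ((hfC a).mpr hh), fun hh => h2 ((hfC b).mpr hh), ?_⟩
      rw [h3, hfzmul a h1]
    · rintro ⟨h1, h2, h3⟩
      have ha : a ∉ CQ := fun hh => h1 ((hfC a).mp hh)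
      refine ⟨ha, fun hh => h2 ((hfC b).mp hh), ?_⟩
      apply hinj
      rw [hfzmul a ha]
      exact h3
  refine ⟨⟨⟨f, g, hgf, hfg⟩, ?_⟩⟩
  intro a b
  show (comGraph D).Adj (f a) (f b) ↔ (powGraph Q).Adj a b
  rw [lemA a b, lemB (f a) (f b)]
  exact and_congr hinj.ne_iff
    (or_congr (and_congr (hfC a).symm (hfC b).symm)
      (or_congr (e_one a).symm
        (or_congr (e_z a).symm
          (or_congr (e_one b).symm
            (or_congr (e_z b).symm (e_pair a b).symm)))))
end

section
/- The power graph of the locally dihedral group D_{2^∞} is isomorphic (as a graph) to the commuting graph of the infinite dihedral group D_∞; moreover, both groups have power graph not equal to commuting graph. -/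
open Subgroup

/-! ### Auxiliary lemmas -/

lemma auxPowGraph_adj {G : Type*} [Group G] (x y : G) :
    (powGraph G).Adj x y ↔ x ≠ y ∧ (x ∈ zpowers y ∨ y ∈ zpowers x) := Iff.rfl

lemma auxComGraph_adj {G : Type*} [Group G] (x y : G) :
    (comGraph G).Adj x y ↔ x ≠ y ∧ x * y = y * x := Iff.rfl

lemma aux_mem_zpowers_of_orderOf_dvd {G : Type*} [Group G] [Fintype G] [IsCyclic G]
    {x y : G} (h : orderOf x ∣ orderOf y) : x ∈ zpowers y := by
  classical
  have hn0 : 0 < orderOf y := orderOf_pos y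
  have hcard : (Finset.univ.filter (fun b : G => b ^ orderOf y = 1)).card ≤ orderOf y :=
    IsCyclic.card_pow_eq_one_le hn0
  have hT : ((zpowers y : Subgroup G) : Set G).toFinset ⊆
      Finset.univ.filter (fun b => b ^ orderOf y = 1) := by
    intro b hb
    simp only [Set.mem_toFinset, SetLike.mem_coe] at hb
    simp only [Finset.mem_filter, Finset.mem_univ, true_and]
    exact orderOf_dvd_iff_pow_eq_one.mp (orderOf_dvd_of_mem_zpowers hb)
  have hTcard : ((zpowers y : Subgroup G) : Set G).toFinset.card = orderOf y := by
    rw [Set.toFinset_card]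
    exact Fintype.card_zpowers
  have heq := Finset.eq_of_subset_of_card_le hT (by rw [hTcard]; exact hcard)
  have hxmem : x ∈ Finset.univ.filter (fun b : G => b ^ orderOf y = 1) := by
    simp only [Finset.mem_filter, Finset.mem_univ, true_and]
    exact orderOf_dvd_iff_pow_eq_one.mp h
  rw [← heq, Set.mem_toFinset] at hxmem
  exact hxmem

lemma aux_prufer_comparable_s19 {x y : ℂˣ} (hx : ∃ n : ℕ, x ^ 2 ^ n = 1)
    (hy : ∃ n : ℕ, y ^ 2 ^ n = 1) :
    x ∈ zpowers y ∨ y ∈ zpowers x := by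
  obtain ⟨n, hn⟩ := hx; obtain ⟨m, hm⟩ := hy
  set k := max n m with hk
  haveI : NeZero ((2 : ℕ) ^ k) := ⟨pow_ne_zero _ two_ne_zero⟩
  haveI : Fintype (rootsOfUnity (2 ^ k) ℂ) := Fintype.ofFinite _
  have hxk : x ^ (2 : ℕ) ^ k = 1 := by
    obtain ⟨d, hd⟩ := pow_dvd_pow 2 (le_max_left n m)
    rw [hd, pow_mul, hn, one_pow]
  have hyk : y ^ (2 : ℕ) ^ k = 1 := by
    obtain ⟨d, hd⟩ := pow_dvd_pow 2 (le_max_right n m)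
    rw [hd, pow_mul, hm, one_pow]
  set x' : rootsOfUnity (2 ^ k) ℂ := ⟨x, hxk⟩ with hx'
  set y' : rootsOfUnity (2 ^ k) ℂ := ⟨y, hyk⟩ with hy'
  have hox : orderOf x' ∣ 2 ^ k :=
    orderOf_dvd_of_pow_eq_one (by ext; push_cast [hx']; exact congrArg Units.val hxk)
  have hoy : orderOf y' ∣ 2 ^ k :=
    orderOf_dvd_of_pow_eq_one (by ext; push_cast [hy']; exact congrArg Units.val hyk)
  obtain ⟨a, -, ha⟩ := (Nat.dvd_prime_pow Nat.prime_two).mp hox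
  obtain ⟨b, -, hb⟩ := (Nat.dvd_prime_pow Nat.prime_two).mp hoy
  have key : ∀ u v : rootsOfUnity (2 ^ k) ℂ, u ∈ zpowers v →
      (u : ℂˣ) ∈ zpowers (v : ℂˣ) := by
    rintro u v ⟨c, hc⟩
    exact ⟨c, by rw [← hc]; norm_cast⟩
  rcases le_total a b with hab | hab
  · left
    refine key x' y' (aux_mem_zpowers_of_orderOf_dvd ?_)
    rw [ha, hb]; exact pow_dvd_pow 2 hab
  · right
    refine key y' x' (aux_mem_zpowers_of_orderOf_dvd ?_)
    rw [ha, hb]; exact pow_dvd_pow 2 hab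

instance : Countable Prufer2 := by
  refine Set.countable_coe_iff.mpr ?_
  have h : (Prufer2 : Set ℂˣ) = ⋃ n : ℕ, ((rootsOfUnity (2 ^ n) ℂ : Subgroup ℂˣ) : Set ℂˣ) := by
    ext z
    simp only [Set.mem_iUnion, SetLike.mem_coe, mem_rootsOfUnity]
    rfl
  rw [h]
  refine Set.countable_iUnion fun n => ?_
  haveI : NeZero ((2 : ℕ) ^ n) := ⟨pow_ne_zero _ two_ne_zero⟩
  haveI : Finite ((rootsOfUnity ((2 : ℕ) ^ n) ℂ : Subgroup ℂˣ) : Set ℂˣ) :=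
    Finite.of_equiv (rootsOfUnity ((2 : ℕ) ^ n) ℂ) (Equiv.refl _)
  exact (Set.toFinite _).countable

noncomputable def auxPruferElem (n : ℕ) : Prufer2 := by
  have h := Complex.isPrimitiveRoot_exp (2 ^ n) (pow_ne_zero _ two_ne_zero)
  have hu := h.isUnit_unit (pow_ne_zero _ two_ne_zero)
  exact ⟨(h.isUnit (pow_ne_zero _ two_ne_zero)).unit, n, hu.pow_eq_one⟩

lemma auxPruferElem_orderOf (n : ℕ) : orderOf ((auxPruferElem n : Prufer2) : ℂˣ) = 2 ^ n := by
  have h := Complex.isPrimitiveRoot_exp (2 ^ n) (pow_ne_zero _ two_ne_zero)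
  have hu := h.isUnit_unit (pow_ne_zero _ two_ne_zero)
  exact hu.eq_orderOf.symm

instance : Infinite Prufer2 := by
  refine Infinite.of_injective auxPruferElem fun a b hab => ?_
  have h : orderOf ((auxPruferElem a : Prufer2) : ℂˣ) = orderOf ((auxPruferElem b : Prufer2) : ℂˣ) := by
    rw [hab]
  rw [auxPruferElem_orderOf, auxPruferElem_orderOf] at h
  exact Nat.pow_right_injective (le_refl 2) h

lemma aux_r_npow (i : ZMod 0) (n : ℕ) :
    (DihedralGroup.r i) ^ n = DihedralGroup.r ((Nat.cast n : ZMod 0) * i) := by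
  induction n with
  | zero => rw [pow_zero, Nat.cast_zero, zero_mul, DihedralGroup.one_def]
  | succ n ih =>
    rw [pow_succ, ih, DihedralGroup.r_mul_r]
    congr 1
    rw [Nat.cast_add, Nat.cast_one]
    ring

lemma aux_r_zpow (i : ZMod 0) (k : ℤ) :
    (DihedralGroup.r i) ^ k = DihedralGroup.r ((Int.cast k : ZMod 0) * i) := by
  cases k with
  | ofNat n =>
    rw [Int.ofNat_eq_coe, zpow_natCast, aux_r_npow]
    norm_cast
  | negSucc n =>
    rw [zpow_negSucc, aux_r_npow]
    show (DihedralGroup.r _)⁻¹ = _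
    have h : ∀ j : ZMod 0, (DihedralGroup.r j)⁻¹ = DihedralGroup.r (-j) := fun _ => rfl
    rw [h]
    congr 1
    rw [Int.cast_negSucc, Nat.cast_add, Nat.cast_one]
    ring

lemma aux_dihedral_com (x y : DihedralGroup 0) :
    (comGraph (DihedralGroup 0)).Adj x y ↔ x ≠ y ∧
      ((∃ i j, x = DihedralGroup.r i ∧ y = DihedralGroup.r j) ∨
        x = DihedralGroup.r 0 ∨ y = DihedralGroup.r 0) := by
  haveI : NoZeroDivisors (ZMod 0) := (inferInstance : NoZeroDivisors ℤ)
  rw [auxComGraph_adj]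
  rcases x with i | i <;> rcases y with j | j
  · constructor
    · rintro ⟨hne, -⟩
      exact ⟨hne, Or.inl ⟨i, j, rfl, rfl⟩⟩
    · rintro ⟨hne, -⟩
      exact ⟨hne, by rw [DihedralGroup.r_mul_r, DihedralGroup.r_mul_r, add_comm]⟩
  · constructor
    · rintro ⟨hne, hcomm⟩
      rw [DihedralGroup.r_mul_sr, DihedralGroup.sr_mul_r] at hcomm
      have h1 : j - i = j + i := by injection hcomm
      have h2 : i + i = 0 := by linear_combination -h1
      have h3 : i = 0 := add_self_eq_zero.mp h2
      exact ⟨hne, Or.inr (Or.inl (by rw [h3]))⟩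
    · rintro ⟨hne, (⟨i', j', -, hy⟩ | hx | hy)⟩
      · exact absurd hy (by simp)
      · have h3 : i = 0 := by injection hx
        subst h3
        exact ⟨hne, by rw [DihedralGroup.r_mul_sr, DihedralGroup.sr_mul_r, sub_zero, add_zero]⟩
      · exact absurd hy (by intro h; cases h)
  · constructor
    · rintro ⟨hne, hcomm⟩
      rw [DihedralGroup.sr_mul_r, DihedralGroup.r_mul_sr] at hcomm
      have h1 : i + j = i - j := by injection hcomm
      have h2 : j + j = 0 := by linear_combination h1
      have h3 : j = 0 := add_self_eq_zero.mp h2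
      exact ⟨hne, Or.inr (Or.inr (by rw [h3]))⟩
    · rintro ⟨hne, (⟨i', j', hx, -⟩ | hx | hy)⟩
      · exact absurd hx (by simp)
      · exact absurd hx (by intro h; cases h)
      · have h3 : j = 0 := by injection hy
        subst h3
        exact ⟨hne, by rw [DihedralGroup.sr_mul_r, DihedralGroup.r_mul_sr, sub_zero, add_zero]⟩
  · constructor
    · rintro ⟨hne, hcomm⟩
      rw [DihedralGroup.sr_mul_sr, DihedralGroup.sr_mul_sr] at hcomm
      have h1 : j - i = i - j := by injection hcomm
      have h2 : (j - i) + (j - i) = 0 := by linear_combination h1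
      have h3 : j - i = 0 := add_self_eq_zero.mp h2
      have h4 : j = i := by linear_combination h3
      exact absurd (by rw [h4]) hne
    · rintro ⟨hne, (⟨i', j', hx, -⟩ | hx | hy)⟩
      · exact absurd hx (by simp)
      · exact absurd hx (by intro h; cases h)
      · exact absurd hy (by intro h; cases h)

lemma aux_pow_ne_com_dihedral : powGraph (DihedralGroup 0) ≠ comGraph (DihedralGroup 0) := by
  intro h
  have hadj : (powGraph (DihedralGroup 0)).Adj (DihedralGroup.r 2) (DihedralGroup.r 3) := by
    rw [h, auxComGraph_adj]
    constructor
    · intro hh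
      have h23 : (2 : ZMod 0) = 3 := by injection hh
      have h23' : (2 : ℤ) = 3 := h23
      omega
    · rw [DihedralGroup.r_mul_r, DihedralGroup.r_mul_r, add_comm]
  obtain ⟨hne, h1 | h1⟩ := hadj
  · obtain ⟨k, hk⟩ := Subgroup.mem_zpowers_iff.mp h1
    rw [aux_r_zpow] at hk
    have h2 : (Int.cast k : ZMod 0) * 3 = 2 := by injection hk
    have h3 : (k : ℤ) * 3 = 2 := h2
    omega
  · obtain ⟨k, hk⟩ := Subgroup.mem_zpowers_iff.mp h1
    rw [aux_r_zpow] at hk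
    have h2 : (Int.cast k : ZMod 0) * 2 = 3 := by injection hk
    have h3 : (k : ℤ) * 2 = 3 := h2
    omega

/-- The power graph of the locally dihedral group `D_{2^∞}` is isomorphic to the commuting
graph of the infinite dihedral group `D_∞` (realised as `DihedralGroup 0`); moreover both
groups have power graph different from their commuting graph. -/
theorem powGraph_locally_dihedral_iso_comGraph_infinite_dihedral
    {D : Type*} [Group D] (C : Subgroup D) (hC : Nonempty (C ≃* Prufer2))
    (s : D) (hs : s ^ 2 = 1) (hconj : ∀ c ∈ C, s * c * s = c⁻¹)
    (hgen : Subgroup.closure ((C : Set D) ∪ {s}) = ⊤) :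
    Nonempty (powGraph D ≃g comGraph (DihedralGroup 0)) ∧
      powGraph D ≠ comGraph D ∧
      powGraph (DihedralGroup 0) ≠ comGraph (DihedralGroup 0) := by
  classical
  obtain ⟨e⟩ := hC
  have hss : s * s = 1 := by rw [← pow_two]; exact hs
  -- `C` is commutative
  have hcommC : ∀ u v : C, u * v = v * u := fun u v =>
    e.injective (by rw [map_mul, map_mul, mul_comm])
  -- an element of order 4 in `C`
  have hIu : Complex.I * (-Complex.I) = 1 := by simp [Complex.I_mul_I]
  have hIu' : (-Complex.I) * Complex.I = 1 := by simp [Complex.I_mul_I]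
  set iu : ℂˣ := ⟨Complex.I, -Complex.I, hIu, hIu'⟩ with hiudef
  have hiu : iu ∈ Prufer2 := by
    refine ⟨2, ?_⟩
    ext
    simp [Units.val_pow_eq_pow_val, hiudef, pow_succ, Complex.I_mul_I]
  set c4 : C := e.symm ⟨iu, hiu⟩ with hc4def
  have hc4ne : (c4 : D) * (c4 : D) ≠ 1 := by
    intro h
    have h' : c4 * c4 = 1 := by exact_mod_cast h
    have h2 : (⟨iu, hiu⟩ : Prufer2) * ⟨iu, hiu⟩ = 1 := by
      calc (⟨iu, hiu⟩ : Prufer2) * ⟨iu, hiu⟩ = e c4 * e c4 := by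
            rw [hc4def, MulEquiv.apply_symm_apply]
        _ = e (c4 * c4) := (map_mul e _ _).symm
        _ = e 1 := by rw [h']
        _ = 1 := map_one e
    have h3 : iu * iu = 1 := congrArg Subtype.val h2
    have h4 : Complex.I * Complex.I = 1 := congrArg Units.val h3
    rw [Complex.I_mul_I] at h4
    norm_num at h4
  -- `s` is not in `C`
  have hsnotC : s ∉ C := by
    intro h
    have h1 : (⟨s, h⟩ : C) * c4 = c4 * ⟨s, h⟩ := hcommC _ _
    have h2 : s * (c4 : D) = (c4 : D) * s := congrArg Subtype.val h1
    have h3 := hconj (c4 : D) c4.2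
    have h4 : (c4 : D)⁻¹ = (c4 : D) := by
      rw [← h3, h2, mul_assoc, hss, mul_one]
    apply hc4ne
    nth_rewrite 2 [← h4]
    exact mul_inv_cancel _
  -- the coset decomposition
  have hcover : ∀ x : D, x ∈ C ∨ x * s ∈ C := by
    let K : Subgroup D :=
      { carrier := {x | x ∈ C ∨ x * s ∈ C}
        one_mem' := Or.inl (one_mem C)
        mul_mem' := by
          rintro a b (ha | ha) (hb | hb)
          · exact Or.inl (mul_mem ha hb)
          · refine Or.inr ?_
            rw [mul_assoc]
            exact mul_mem ha hb
          · refine Or.inr ?_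
            have hae : a = (a * s) * s := by rw [mul_assoc, hss, mul_one]
            have key : a * b * s = (a * s) * b⁻¹ := by
              conv_lhs => rw [hae]
              rw [← hconj b hb]
              group
            rw [key]
            exact mul_mem ha (inv_mem hb)
          · refine Or.inl ?_
            have hae : a = (a * s) * s := by rw [mul_assoc, hss, mul_one]
            have hbe : b = (b * s) * s := by rw [mul_assoc, hss, mul_one]
            have key : a * b = (a * s) * (b * s)⁻¹ := by
              conv_lhs => rw [hae, hbe]
              rw [← hconj (b * s) hb]
              group
            rw [key]
            exact mul_mem ha (inv_mem hb)
        inv_mem' := by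
          rintro x (h | h)
          · exact Or.inl (inv_mem h)
          · refine Or.inr ?_
            have key : x⁻¹ * s = ((x * s)⁻¹)⁻¹ := by
              rw [← hconj ((x * s)⁻¹) (inv_mem h)]
              group
            rw [key]
            exact inv_mem (inv_mem h) }
    intro x
    have hle : Subgroup.closure ((C : Set D) ∪ {s}) ≤ K := by
      refine Subgroup.closure_le K |>.mpr ?_
      rintro y (hy | hy)
      · exact Or.inl hy
      · rcases hy with rfl
        exact Or.inr (by rw [hss]; exact one_mem C)
    have : x ∈ Subgroup.closure ((C : Set D) ∪ {s}) := by rw [hgen]; trivial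
    exact hle this
  -- elements outside `C` are involutions
  have hinv : ∀ x : D, x ∉ C → x * x = 1 := by
    intro x hx
    have hc : x * s ∈ C := (hcover x).resolve_left hx
    have hxe : x = (x * s) * s := by rw [mul_assoc, hss, mul_one]
    have key : x * x = (x * s) * (x * s)⁻¹ := by
      conv_lhs => rw [hxe]
      rw [← hconj (x * s) hc]
      group
    rw [key, mul_inv_cancel]
  have hzinv : ∀ t : D, t ∉ C → ∀ k : ℤ, t ^ k = 1 ∨ t ^ k = t := by
    intro t ht k
    have h2 : t ^ (2 : ℤ) = 1 := by
      rw [show (2 : ℤ) = ((2 : ℕ) : ℤ) by norm_num, zpow_natCast, pow_two]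
      exact hinv t ht
    rcases Int.even_or_odd k with ⟨m, hm⟩ | ⟨m, hm⟩
    · left
      rw [hm, show m + m = 2 * m by ring, zpow_mul, h2, one_zpow]
    · right
      rw [hm, zpow_add, zpow_mul, h2, one_zpow, one_mul, zpow_one]
  -- comparability inside `C`
  have hCcmp : ∀ (a b : D), a ∈ C → b ∈ C → a ∈ zpowers b ∨ b ∈ zpowers a := by
    intro a b ha hb
    have hcmp := aux_prufer_comparable_s19 (e ⟨a, ha⟩).2 (e ⟨b, hb⟩).2
    have key : ∀ (u v : C), ((e u : Prufer2) : ℂˣ) ∈ zpowers ((e v : Prufer2) : ℂˣ) →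
        (u : D) ∈ zpowers (v : D) := by
      rintro u v ⟨c, hc⟩
      refine ⟨c, ?_⟩
      have h1 : (e v) ^ c = e u := by
        refine Subtype.ext ?_
        rw [SubgroupClass.coe_zpow]
        exact hc
      have h2 : v ^ c = u := by
        have := congrArg e.symm h1
        rwa [← map_zpow, MulEquiv.symm_apply_apply, MulEquiv.symm_apply_apply] at this
      calc (v : D) ^ c = ((v ^ c : C) : D) := by push_cast; rfl
        _ = (u : D) := by rw [h2]
    rcases hcmp with h | h
    · exact Or.inl (key ⟨a, ha⟩ ⟨b, hb⟩ h)
    · exact Or.inr (key ⟨b, hb⟩ ⟨a, ha⟩ h)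
  -- characterization of the power graph of `D`
  have hpow : ∀ a b : D, (powGraph D).Adj a b ↔
      a ≠ b ∧ ((a ∈ C ∧ b ∈ C) ∨ a = 1 ∨ b = 1) := by
    intro a b
    rw [auxPowGraph_adj]
    constructor
    · rintro ⟨hne, hpw⟩
      refine ⟨hne, ?_⟩
      by_cases ha : a ∈ C <;> by_cases hb : b ∈ C
      · exact Or.inl ⟨ha, hb⟩
      · rcases hpw with h | h
        · obtain ⟨k, hk⟩ := Subgroup.mem_zpowers_iff.mp h
          rcases hzinv b hb k with h1 | h1
          · exact Or.inr (Or.inl (by rw [← hk, h1]))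
          · exact absurd (by rw [← hk, h1]) hne
        · obtain ⟨k, hk⟩ := Subgroup.mem_zpowers_iff.mp h
          exact absurd (hk ▸ C.zpow_mem ha k) hb
      · rcases hpw with h | h
        · obtain ⟨k, hk⟩ := Subgroup.mem_zpowers_iff.mp h
          exact absurd (hk ▸ C.zpow_mem hb k) ha
        · obtain ⟨k, hk⟩ := Subgroup.mem_zpowers_iff.mp h
          rcases hzinv a ha k with h1 | h1
          · exact Or.inr (Or.inr (by rw [← hk, h1]))
          · exact absurd (by rw [← hk, h1]) hne.symm
      · rcases hpw with h | h
        · obtain ⟨k, hk⟩ := Subgroup.mem_zpowers_iff.mp h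
          rcases hzinv b hb k with h1 | h1
          · exact absurd (by rw [← hk, h1]; exact one_mem C) ha
          · exact absurd (by rw [← hk, h1]) hne
        · obtain ⟨k, hk⟩ := Subgroup.mem_zpowers_iff.mp h
          rcases hzinv a ha k with h1 | h1
          · exact absurd (by rw [← hk, h1]; exact one_mem C) hb
          · exact absurd (by rw [← hk, h1]) hne.symm
    · rintro ⟨hne, (⟨ha, hb⟩ | rfl | rfl)⟩
      · exact ⟨hne, hCcmp a b ha hb⟩
      · exact ⟨hne, Or.inl (one_mem _)⟩
      · exact ⟨hne, Or.inr (one_mem _)⟩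
  -- element of order 2 in `C`
  have hm1 : (-1 : ℂˣ) ∈ Prufer2 := by
    refine ⟨1, ?_⟩
    ext
    simp [Units.val_pow_eq_pow_val]
  set c2 : C := e.symm ⟨-1, hm1⟩ with hc2def
  have hc2sq : (c2 : D) * (c2 : D) = 1 := by
    have h2 : (⟨-1, hm1⟩ : Prufer2) * ⟨-1, hm1⟩ = 1 := by
      ext
      simp
    have h3 : c2 * c2 = 1 := by
      rw [hc2def, ← map_mul, h2, map_one]
    calc (c2 : D) * (c2 : D) = ((c2 * c2 : C) : D) := by push_cast; rfl
      _ = 1 := by rw [h3]; rfl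
  have hc2ne1 : (c2 : D) ≠ 1 := by
    intro h
    have h1 : c2 = 1 := by exact_mod_cast h
    have h2 : (⟨-1, hm1⟩ : Prufer2) = 1 := by
      rw [← MulEquiv.apply_symm_apply e ⟨-1, hm1⟩, ← hc2def, h1, map_one]
    have h3 : (-1 : ℂˣ) = 1 := congrArg Subtype.val h2
    have h4 : (-1 : ℂ) = 1 := congrArg Units.val h3
    norm_num at h4
  -- first part: build the isomorphism
  have h1C : (1 : D) ∈ C := one_mem C
  obtain ⟨eC, heC1⟩ : ∃ eC : (C : Type _) ≃ ℤ, eC ⟨1, h1C⟩ = 0 := by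
    have hne : Nonempty ((Prufer2 : Type _) ≃ ℤ) := nonempty_equiv_of_countable
    obtain ⟨eP⟩ := hne
    refine ⟨(e.toEquiv.trans eP).trans
      (Equiv.swap ((e.toEquiv.trans eP) ⟨1, h1C⟩) 0), ?_⟩
    simp [Equiv.swap_apply_left]
  have hNC : ∀ c : C, (c : D) * s ∉ C := by
    intro c hcs
    apply hsnotC
    have h1 : ((c : D))⁻¹ * ((c : D) * s) ∈ C := mul_mem (inv_mem c.2) hcs
    rwa [← mul_assoc, inv_mul_cancel, one_mul] at h1
  obtain ⟨eN⟩ : Nonempty ({x : D // x ∉ C} ≃ ℤ) := by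
    refine ⟨Equiv.trans ?_ eC⟩
    exact {
      toFun := fun x => ⟨x.1 * s, (hcover x.1).resolve_left x.2⟩
      invFun := fun c => ⟨(c : D) * s, hNC c⟩
      left_inv := fun x => Subtype.ext (by simp only; rw [mul_assoc, hss, mul_one])
      right_inv := fun c => Subtype.ext (by simp only; rw [mul_assoc, hss, mul_one]) }
  obtain ⟨F, hF1, hF2⟩ : ∃ F : D ≃ DihedralGroup 0,
      (∀ x : D, x ∈ C ↔ ∃ i, F x = DihedralGroup.r i) ∧
      (∀ x : D, F x = DihedralGroup.r 0 ↔ x = 1) := by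
    refine ⟨{
      toFun := fun x => if h : x ∈ C then DihedralGroup.r (eC ⟨x, h⟩)
        else DihedralGroup.sr (eN ⟨x, h⟩)
      invFun := fun y => match y with
        | DihedralGroup.r i => ((eC.symm i : C) : D)
        | DihedralGroup.sr i => ((eN.symm i).1 : D)
      left_inv := ?_
      right_inv := ?_ }, ?_, ?_⟩
    · intro x
      by_cases h : x ∈ C
      · simp only [dif_pos h]
        show ((eC.symm (eC ⟨x, h⟩) : C) : D) = x
        rw [Equiv.symm_apply_apply]
      · simp only [dif_neg h]
        show ((eN.symm (eN ⟨x, h⟩)).1 : D) = x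
        rw [Equiv.symm_apply_apply]
    · intro y
      rcases y with i | i
      · show (if h : ((eC.symm i : C) : D) ∈ C then _ else _) = _
        rw [dif_pos (eC.symm i).2]
        congr 1
        rw [Subtype.coe_eta]
        exact eC.apply_symm_apply i
      · show (if h : ((eN.symm i).1 : D) ∈ C then _ else _) = _
        rw [dif_neg (eN.symm i).2]
        congr 1
        rw [Subtype.coe_eta]
        exact eN.apply_symm_apply i
    · intro x
      constructor
      · intro h
        exact ⟨eC ⟨x, h⟩, by simp only [Equiv.coe_fn_mk, dif_pos h]⟩
      · rintro ⟨i, hi⟩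
        by_contra h
        simp only [Equiv.coe_fn_mk, dif_neg h] at hi
        exact absurd hi (by simp)
    · intro x
      constructor
      · intro h
        by_cases hx : x ∈ C
        · simp only [Equiv.coe_fn_mk, dif_pos hx] at h
          have h1 : eC ⟨x, hx⟩ = 0 := by injection h
          have h2 : eC ⟨x, hx⟩ = eC ⟨1, h1C⟩ := by rw [h1, heC1]
          have h3 := eC.injective h2
          exact congrArg Subtype.val h3
        · simp only [Equiv.coe_fn_mk, dif_neg hx] at h
          exact absurd h (by intro h; cases h)
      · rintro rfl
        simp only [Equiv.coe_fn_mk, dif_pos h1C]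
        exact congrArg DihedralGroup.r heC1
  refine ⟨⟨⟨F, ?_⟩⟩, ?_, aux_pow_ne_com_dihedral⟩
  · intro a b
    rw [aux_dihedral_com, hpow]
    have hinj : F a = F b ↔ a = b := F.injective.eq_iff
    constructor
    · rintro ⟨hne, h⟩
      refine ⟨fun hab => hne (by rw [hab]), ?_⟩
      rcases h with ⟨i, j, hi, hj⟩ | h | h
      · exact Or.inl ⟨(hF1 a).mpr ⟨i, hi⟩, (hF1 b).mpr ⟨j, hj⟩⟩
      · exact Or.inr (Or.inl ((hF2 a).mp h))
      · exact Or.inr (Or.inr ((hF2 b).mp h))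
    · rintro ⟨hne, h⟩
      refine ⟨fun hab => hne (hinj.mp hab), ?_⟩
      rcases h with ⟨ha, hb⟩ | h | h
      · obtain ⟨i, hi⟩ := (hF1 a).mp ha
        obtain ⟨j, hj⟩ := (hF1 b).mp hb
        exact Or.inl ⟨i, j, hi, hj⟩
      · exact Or.inr (Or.inl ((hF2 a).mpr h))
      · exact Or.inr (Or.inr ((hF2 b).mpr h))
  -- second part: powGraph D ≠ comGraph D
  · intro hEq
    set t' : D := (c2 : D) * s with ht'def
    have ht'ne : s ≠ t' := by
      intro h
      have h1 : (1 : D) * s = (c2 : D) * s := by rw [one_mul, ← ht'def, h]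
      have h2 : (1 : D) = (c2 : D) := mul_right_cancel h1
      exact hc2ne1 h2.symm
    have hcomm : s * t' = t' * s := by
      have h1 : s * (c2 : D) * s = (c2 : D)⁻¹ := hconj _ c2.2
      have h2 : (c2 : D)⁻¹ = (c2 : D) := by
        rw [inv_eq_iff_mul_eq_one, hc2sq]
      calc s * t' = s * (c2 : D) * s := by rw [ht'def, mul_assoc]
        _ = (c2 : D) := by rw [h1, h2]
        _ = (c2 : D) * (s * s) := by rw [hss, mul_one]
        _ = t' * s := by rw [ht'def, mul_assoc]
    have hadjCom : (comGraph D).Adj s t' := ⟨ht'ne, hcomm⟩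
    have hnotPow : ¬ (powGraph D).Adj s t' := by
      rw [hpow]
      rintro ⟨-, (⟨hsC, -⟩ | h1 | h1)⟩
      · exact hsnotC hsC
      · exact hsnotC (by rw [h1]; exact one_mem C)
      · exact hNC c2 (by rw [← ht'def, h1]; exact one_mem C)
    rw [hEq] at hnotPow
    exact hnotPow hadjCom
end
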